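/- arXiv:math/0012126 — 3 statements merged into one kernel-verified Lean document; each statement's English description precedes it below -/
import Mathlib

section
/- Let a, n, c be positive integers and let (k₁, k₂, …, k_a) be a weakly decreasing sequence of positive integers with k₁ ≤ c. Then 2·S_n(k₁,…,k_a) = A_n(k₁,…,k_a) · (n·a·c + (a+n−1)·(k₁ + k₂ + ⋯ + k_a)); equivalently, S_n(k₁,…,k_a)/A_n(k₁,…,k_a) = (1/2)·(n·a·c + (a+n−1)·Σ_{i=1}^{a} k_i). -/
open Finset

/-- `(n; k₁, …, k_a)`-arrays: assignments of integers to the cells `(i, j)` with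
`1 ≤ i ≤ a`, `1 ≤ j ≤ i + n` (the region `F_{a,n}`) such that the last entry of row `i`
is `k i`, all entries are at most `c`, and rows and columns are weakly decreasing within
`F_{a,n}`.  Cells are encoded 0-based (cell `(i, j)` corresponds to indices `(i-1, j-1)`),
entries take values in `{0, …, c}` (decreasingness forces all entries of a genuine array
to lie in this range), and entries outside `F_{a,n}` are normalised to `0`. -/
def Arrays (a n c : ℕ) (k : Fin a → ℕ) : Finset (Fin a → Fin (a + n) → Fin (c + 1)) :=
  univ.filter (fun T =>
    (∀ i : Fin a, (T i ⟨(i : ℕ) + n, Nat.add_lt_add_right i.isLt n⟩ : ℕ) = k i) ∧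
    (∀ i : Fin a, ∀ j j' : Fin (a + n),
        j ≤ j' → (j' : ℕ) ≤ (i : ℕ) + n → T i j' ≤ T i j) ∧
    (∀ i i' : Fin a, ∀ j : Fin (a + n),
        i ≤ i' → (j : ℕ) ≤ (i : ℕ) + n → T i' j ≤ T i j) ∧
    (∀ i : Fin a, ∀ j : Fin (a + n), (i : ℕ) + n < (j : ℕ) → T i j = 0))

namespace AES

variable {a n c : ℕ}

/-- Padded diagonal entry: the entry of row `i` on diagonal `e` (column `i+n-e`),
padded with `c` when the column would be negative. -/
def padE (a n c : ℕ) (T : Fin a → Fin (a + n) → Fin (c + 1)) (i : Fin a) (e : ℕ) : ℕ :=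
  if h : e ≤ (i : ℕ) + n then
    (T i ⟨(i : ℕ) + n - e, by have := i.isLt; omega⟩ : ℕ)
  else c

/-- Sum of padded entries along diagonal `e`. -/
def Dt (a n c : ℕ) (T : Fin a → Fin (a + n) → Fin (c + 1)) (e : ℕ) : ℕ :=
  ∑ i : Fin a, padE a n c T i e

/-- The "up" neighbour value (row above, same column), padded with `c`. -/
def upN (a n c : ℕ) (T : Fin a → Fin (a + n) → Fin (c + 1)) (i : Fin a)
    (j : Fin (a + n)) : ℕ :=
  if h : 0 < (i : ℕ) then (T ⟨(i : ℕ) - 1, by have := i.isLt; omega⟩ j : ℕ) else c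

/-- The "down" neighbour value (row below, same column), padded with `0`. -/
def dnN (a n c : ℕ) (T : Fin a → Fin (a + n) → Fin (c + 1)) (i : Fin a)
    (j : Fin (a + n)) : ℕ :=
  if h : (i : ℕ) + 1 < a then (T ⟨(i : ℕ) + 1, h⟩ j : ℕ) else 0

/-- Toggled value at a cell of diagonal `d`. -/
def togVal (a n c d : ℕ) (T : Fin a → Fin (a + n) → Fin (c + 1)) (i : Fin a)
    (j : Fin (a + n)) : ℕ :=
  min c (min (padE a n c T i (d + 1)) (upN a n c T i j) - (T i j : ℕ)
         + max (padE a n c T i (d - 1)) (dnN a n c T i j))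

/-- The diagonal-`d` toggle map. -/
def tog (a n c d : ℕ) (T : Fin a → Fin (a + n) → Fin (c + 1)) :
    Fin a → Fin (a + n) → Fin (c + 1) :=
  fun i j =>
    if (j : ℕ) + d = (i : ℕ) + n then
      ⟨togVal a n c d T i j, Nat.lt_succ_of_le (min_le_left _ _)⟩
    else T i j

lemma padE_le (T : Fin a → Fin (a + n) → Fin (c + 1)) (i : Fin a) (e : ℕ) :
    padE a n c T i e ≤ c := by
  unfold padE; split
  · exact Fin.is_le _
  · exact le_rfl

lemma upN_le (T : Fin a → Fin (a + n) → Fin (c + 1)) (i : Fin a) (j : Fin (a + n)) :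
    upN a n c T i j ≤ c := by
  unfold upN; split
  · exact Fin.is_le _
  · exact le_rfl


lemma mem_arrays {k : Fin a → ℕ} {T : Fin a → Fin (a + n) → Fin (c + 1)} :
    T ∈ Arrays a n c k ↔
      ((∀ i : Fin a, (T i ⟨(i : ℕ) + n, Nat.add_lt_add_right i.isLt n⟩ : ℕ) = k i) ∧
       (∀ i : Fin a, ∀ j j' : Fin (a + n),
           j ≤ j' → (j' : ℕ) ≤ (i : ℕ) + n → T i j' ≤ T i j) ∧
       (∀ i i' : Fin a, ∀ j : Fin (a + n),
           i ≤ i' → (j : ℕ) ≤ (i : ℕ) + n → T i' j ≤ T i j) ∧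
       (∀ i : Fin a, ∀ j : Fin (a + n), (i : ℕ) + n < (j : ℕ) → T i j = 0)) := by
  unfold Arrays
  simp only [Finset.mem_filter, Finset.mem_univ, true_and]

section Facts

variable {k : Fin a → ℕ} {T : Fin a → Fin (a + n) → Fin (c + 1)}
variable (hT : T ∈ Arrays a n c k)

/-- Row monotonicity, ℕ-valued. -/
lemma row_mono (hT : T ∈ Arrays a n c k) (i : Fin a) (j j' : Fin (a + n))
    (h1 : (j : ℕ) ≤ (j' : ℕ)) (h2 : (j' : ℕ) ≤ (i : ℕ) + n) :
    (T i j' : ℕ) ≤ (T i j : ℕ) :=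
  (mem_arrays.mp hT).2.1 i j j' h1 h2

/-- Column monotonicity, ℕ-valued. -/
lemma col_mono (hT : T ∈ Arrays a n c k) (i i' : Fin a) (j : Fin (a + n))
    (h1 : (i : ℕ) ≤ (i' : ℕ)) (h2 : (j : ℕ) ≤ (i : ℕ) + n) :
    (T i' j : ℕ) ≤ (T i j : ℕ) :=
  (mem_arrays.mp hT).2.2.1 i i' j h1 h2

lemma bdry (hT : T ∈ Arrays a n c k) (i : Fin a) :
    (T i ⟨(i : ℕ) + n, Nat.add_lt_add_right i.isLt n⟩ : ℕ) = k i :=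
  (mem_arrays.mp hT).1 i

section Toggled

variable {d : ℕ} {i : Fin a} {j : Fin (a + n)}
variable (hd : 1 ≤ d) (hj : (j : ℕ) + d = (i : ℕ) + n)

/-- The entry is at most the left padded neighbour. -/
lemma le_tA (hT : T ∈ Arrays a n c k) (hj : (j : ℕ) + d = (i : ℕ) + n) :
    (T i j : ℕ) ≤ padE a n c T i (d + 1) := by
  unfold padE; split
  · next h => exact row_mono hT i _ j (by simp; omega) (by omega)
  · exact Fin.is_le _

lemma le_tU (hT : T ∈ Arrays a n c k) (hd : 1 ≤ d) (hj : (j : ℕ) + d = (i : ℕ) + n) :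
    (T i j : ℕ) ≤ upN a n c T i j := by
  unfold upN; split
  · next h => exact col_mono hT _ i j (by simp) (by simp; omega)
  · exact Fin.is_le _

lemma tB_le (hT : T ∈ Arrays a n c k) (hd : 1 ≤ d) (hj : (j : ℕ) + d = (i : ℕ) + n) :
    padE a n c T i (d - 1) ≤ (T i j : ℕ) := by
  unfold padE; split
  · next h => exact row_mono hT i j _ (by simp; omega) (by simp)
  · next h => exact absurd (by omega) h

lemma tD_le (hT : T ∈ Arrays a n c k) (hj : (j : ℕ) + d = (i : ℕ) + n) :
    dnN a n c T i j ≤ (T i j : ℕ) := by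
  unfold dnN; split
  · next h => exact col_mono hT i _ j (by simp) (by omega)
  · exact Nat.zero_le _

/-- With the bounds in force, the outer `min` in `togVal` collapses. -/
lemma togVal_eq (hT : T ∈ Arrays a n c k) (hd : 1 ≤ d) (hj : (j : ℕ) + d = (i : ℕ) + n) :
    togVal a n c d T i j
      = min (padE a n c T i (d + 1)) (upN a n c T i j) - (T i j : ℕ)
        + max (padE a n c T i (d - 1)) (dnN a n c T i j) := by
  unfold togVal
  have h1 : (T i j : ℕ) ≤ min (padE a n c T i (d + 1)) (upN a n c T i j) :=
    le_min (le_tA hT hj) (le_tU hT hd hj)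
  have h2 : max (padE a n c T i (d - 1)) (dnN a n c T i j) ≤ (T i j : ℕ) :=
    max_le (tB_le hT hd hj) (tD_le hT hj)
  have h3 : padE a n c T i (d + 1) ≤ c := padE_le T i (d + 1)
  have h4 : upN a n c T i j ≤ c := upN_le T i j
  exact min_eq_right (by omega)

lemma togVal_ge (hT : T ∈ Arrays a n c k) (hd : 1 ≤ d) (hj : (j : ℕ) + d = (i : ℕ) + n) :
    max (padE a n c T i (d - 1)) (dnN a n c T i j) ≤ togVal a n c d T i j := by
  rw [togVal_eq hT hd hj]; omega

lemma togVal_le (hT : T ∈ Arrays a n c k) (hd : 1 ≤ d) (hj : (j : ℕ) + d = (i : ℕ) + n) :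
    togVal a n c d T i j ≤ min (padE a n c T i (d + 1)) (upN a n c T i j) := by
  rw [togVal_eq hT hd hj]
  have h1 : (T i j : ℕ) ≤ min (padE a n c T i (d + 1)) (upN a n c T i j) :=
    le_min (le_tA hT hj) (le_tU hT hd hj)
  have h2 : max (padE a n c T i (d - 1)) (dnN a n c T i j) ≤ (T i j : ℕ) :=
    max_le (tB_le hT hd hj) (tD_le hT hj)
  omega

end Toggled

end Facts

lemma tog_mem {k : Fin a → ℕ} {T : Fin a → Fin (a + n) → Fin (c + 1)}
    (hT : T ∈ Arrays a n c k) {d : ℕ} (hd : 1 ≤ d) :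
    tog a n c d T ∈ Arrays a n c k := by
  obtain ⟨p1, p2, p3, p4⟩ := mem_arrays.mp hT
  rw [mem_arrays]
  refine ⟨?_, ?_, ?_, ?_⟩
  · intro i
    simp only [tog]
    rw [if_neg (by omega)]
    exact p1 i
  · intro i j j' hjj' hj'le
    rw [Fin.le_def] at hjj' ⊢
    simp only [tog]
    by_cases hc' : (j' : ℕ) + d = (i : ℕ) + n <;>
      by_cases hc : (j : ℕ) + d = (i : ℕ) + n
    · have : j = j' := Fin.ext (by omega)
      subst this; simp
    · -- j' toggled, j not
      rw [if_pos hc', if_neg hc]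
      have h1 : togVal a n c d T i j' ≤ padE a n c T i (d + 1) :=
        le_trans (togVal_le hT hd hc') (min_le_left _ _)
      refine le_trans h1 ?_
      unfold padE; split
      · next h => exact row_mono hT i j _ (by simp; omega) (by simp)
      · next h => exact absurd (by omega) h
    · -- j toggled, j' not
      rw [if_neg hc', if_pos hc]
      have h1 : padE a n c T i (d - 1) ≤ togVal a n c d T i j :=
        le_trans (le_max_left _ _) (togVal_ge hT hd hc)
      refine le_trans ?_ h1
      unfold padE; split
      · next h => exact row_mono hT i _ j' (by simp; omega) hj'le
      · next h => exact absurd (by omega) h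
    · rw [if_neg hc', if_neg hc]
      exact p2 i j j' (Fin.le_def.mpr hjj') hj'le
  · intro i i' j hii' hjle
    rw [Fin.le_def] at hii' ⊢
    simp only [tog]
    by_cases hc' : (j : ℕ) + d = (i' : ℕ) + n <;>
      by_cases hc : (j : ℕ) + d = (i : ℕ) + n
    · have : i = i' := Fin.ext (by omega)
      subst this; simp
    · -- (i',j) toggled, (i,j) not
      rw [if_pos hc', if_neg hc]
      have h1 : togVal a n c d T i' j ≤ upN a n c T i' j :=
        le_trans (togVal_le hT hd hc') (min_le_right _ _)
      refine le_trans h1 ?_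
      unfold upN; split
      · next h => exact col_mono hT i _ j (by simp; omega) hjle
      · next h => exact absurd (by omega) h
    · -- (i,j) toggled, (i',j) not
      rw [if_neg hc', if_pos hc]
      have h1 : dnN a n c T i j ≤ togVal a n c d T i j :=
        le_trans (le_max_right _ _) (togVal_ge hT hd hc)
      refine le_trans ?_ h1
      unfold dnN; split
      · next h => exact col_mono hT _ i' j (by simp; omega) (by simp; omega)
      · next h =>
        exact absurd (by have := i'.isLt; omega) h
    · rw [if_neg hc', if_neg hc]
      exact p3 i i' j (Fin.le_def.mpr hii') hjle
  · intro i j hij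
    simp only [tog]
    rw [if_neg (by omega)]
    exact p4 i j hij

lemma tog_tog {k : Fin a → ℕ} {T : Fin a → Fin (a + n) → Fin (c + 1)}
    (hT : T ∈ Arrays a n c k) {d : ℕ} (hd : 1 ≤ d) :
    tog a n c d (tog a n c d T) = T := by
  funext i j
  by_cases hc : (j : ℕ) + d = (i : ℕ) + n
  · have hA : padE a n c (tog a n c d T) i (d + 1) = padE a n c T i (d + 1) := by
      unfold padE; split
      · next h => simp only [tog]; rw [if_neg (by omega)]
      · rfl
    have hB : padE a n c (tog a n c d T) i (d - 1) = padE a n c T i (d - 1) := by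
      unfold padE; split
      · next h => simp only [tog]; rw [if_neg (by omega)]
      · rfl
    have hU : upN a n c (tog a n c d T) i j = upN a n c T i j := by
      unfold upN; split
      · next h => simp only [tog]; rw [if_neg (by omega)]
      · rfl
    have hD : dnN a n c (tog a n c d T) i j = dnN a n c T i j := by
      unfold dnN; split
      · next h => simp only [tog]; rw [if_neg (by omega)]
      · rfl
    have hval : ((tog a n c d T) i j : ℕ) = togVal a n c d T i j := by
      simp only [tog]; rw [if_pos hc]
    have e1 := togVal_eq hT hd hc
    have e2 := togVal_eq (tog_mem hT hd) hd hc
    rw [hA, hB, hU, hD, hval] at e2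
    have h1 : (T i j : ℕ) ≤ min (padE a n c T i (d + 1)) (upN a n c T i j) :=
      le_min (le_tA hT hc) (le_tU hT hd hc)
    have h2 : max (padE a n c T i (d - 1)) (dnN a n c T i j) ≤ (T i j : ℕ) :=
      max_le (tB_le hT hd hc) (tD_le hT hc)
    apply Fin.ext
    show ((tog a n c d (tog a n c d T)) i j : ℕ) = (T i j : ℕ)
    have hval2 : ((tog a n c d (tog a n c d T)) i j : ℕ)
        = togVal a n c d (tog a n c d T) i j := by
      simp only [tog]; rw [if_pos hc]
    rw [hval2, e2, e1]
    omega
  · simp only [tog]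
    rw [if_neg hc, if_neg hc]


/-- Telescoping min/max identity over ℤ. -/
lemma teleZ (A : ℕ) (C : ℤ) (α γ : ℕ → ℤ) (hγ0 : γ 0 = C) (hα0 : α 0 ≤ C) (hαa : α A = 0)
    (hγnn : ∀ i, 0 ≤ γ i) :
    ∑ i ∈ range A, (min (α i) (γ i) + max (γ (i + 1)) (α (i + 1)))
      = ∑ i ∈ range A, (α i + γ (i + 1)) := by
  have step : ∀ i, min (α i) (γ i) + max (γ (i + 1)) (α (i + 1))
      = (α (i + 1) + γ (i + 1))
        + ((fun t => min (α t) (γ t)) i - (fun t => min (α t) (γ t)) (i + 1)) := by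
    intro i
    have h1 := min_add_max (γ (i + 1)) (α (i + 1))
    have h2 : min (γ (i + 1)) (α (i + 1)) = min (α (i + 1)) (γ (i + 1)) := min_comm _ _
    simp only
    linarith
  rw [Finset.sum_congr rfl fun i _ => step i, Finset.sum_add_distrib,
    Finset.sum_range_sub' (fun t => min (α t) (γ t)) A]
  have e0 : min (α 0) (γ 0) = α 0 := min_eq_left (by rw [hγ0]; exact hα0)
  have eA : min (α A) (γ A) = α A := min_eq_left (by rw [hαa]; exact hγnn A)
  rw [e0, eA, hαa]
  have hsucc : ∑ i ∈ range A, α (i + 1) = (∑ i ∈ range A, α i) + α A - α 0 := by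
    have h1 := Finset.sum_range_succ' α A
    have h2 := Finset.sum_range_succ α A
    rw [h1] at h2
    linarith
  rw [Finset.sum_add_distrib, Finset.sum_add_distrib, hsucc, hαa]
  ring

/-- Telescoping min/max identity over ℕ. -/
lemma teleN (A C : ℕ) (α γ : ℕ → ℕ) (hγ0 : γ 0 = C) (hα0 : α 0 ≤ C) (hαa : α A = 0) :
    ∑ i ∈ range A, (min (α i) (γ i) + max (γ (i + 1)) (α (i + 1)))
      = ∑ i ∈ range A, (α i + γ (i + 1)) := by
  have h := teleZ A (C : ℤ) (fun t => (α t : ℤ)) (fun t => (γ t : ℤ))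
    (by simp [hγ0]) (by exact_mod_cast hα0) (by simp [hαa])
    (fun i => by positivity)
  have h2 : ((∑ i ∈ range A, (min (α i) (γ i) + max (γ (i + 1)) (α (i + 1))) : ℕ) : ℤ)
      = ((∑ i ∈ range A, (α i + γ (i + 1)) : ℕ) : ℤ) := by
    push_cast
    simpa using h
  exact_mod_cast h2

/-- The `α` sequence: padded entries of diagonal `d+1`, extended by `0`. -/
def alphaF (a n c d : ℕ) (T : Fin a → Fin (a + n) → Fin (c + 1)) (t : ℕ) : ℕ :=
  if h : t < a then padE a n c T ⟨t, h⟩ (d + 1) else 0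

/-- The `γ` sequence: padded entries of diagonal `d-1` of the previous row,
extended by `c` at the top. -/
def gammaF (a n c d : ℕ) (T : Fin a → Fin (a + n) → Fin (c + 1)) (t : ℕ) : ℕ :=
  if t = 0 then c else (if h : t - 1 < a then padE a n c T ⟨t - 1, h⟩ (d - 1) else 0)

lemma alphaF_fin {d : ℕ} (T : Fin a → Fin (a + n) → Fin (c + 1)) (i : Fin a) :
    alphaF a n c d T (i : ℕ) = padE a n c T i (d + 1) := by
  unfold alphaF
  rw [dif_pos i.isLt, Fin.eta]

lemma alphaF_top {d : ℕ} (T : Fin a → Fin (a + n) → Fin (c + 1)) :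
    alphaF a n c d T a = 0 := dif_neg (lt_irrefl a)

lemma gammaF_zero {d : ℕ} (T : Fin a → Fin (a + n) → Fin (c + 1)) :
    gammaF a n c d T 0 = c := if_pos rfl

lemma gammaF_fin {d : ℕ} (T : Fin a → Fin (a + n) → Fin (c + 1)) (i : Fin a) :
    gammaF a n c d T ((i : ℕ) + 1) = padE a n c T i (d - 1) := by
  unfold gammaF
  rw [if_neg (by omega)]
  simp only [Nat.add_sub_cancel]
  rw [dif_pos i.isLt, Fin.eta]

/-- The key exchange identity: toggling diagonal `d` exchanges diagonal sums. -/
lemma key_id {k : Fin a → ℕ} {T : Fin a → Fin (a + n) → Fin (c + 1)}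
    (hT : T ∈ Arrays a n c k) {d : ℕ} (hd : 1 ≤ d) (hd2 : d + 1 ≤ a + n) (ha : 0 < a) :
    Dt a n c (tog a n c d T) d + Dt a n c T d
      = Dt a n c T (d + 1) + Dt a n c T (d - 1) := by
  classical
  have hrow : ∀ i : Fin a,
      padE a n c (tog a n c d T) i d + padE a n c T i d
        = min (alphaF a n c d T (i : ℕ)) (gammaF a n c d T (i : ℕ))
          + max (gammaF a n c d T ((i : ℕ) + 1)) (alphaF a n c d T ((i : ℕ) + 1)) := by
    intro i
    by_cases htog : d ≤ (i : ℕ) + n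
    · -- row i has a cell on diagonal d
      obtain ⟨j, hjv⟩ : ∃ j : Fin (a + n), (j : ℕ) = (i : ℕ) + n - d :=
        ⟨⟨(i : ℕ) + n - d, by have := i.isLt; omega⟩, rfl⟩
      have hj : (j : ℕ) + d = (i : ℕ) + n := by omega
      have hpad1 : padE a n c (tog a n c d T) i d = togVal a n c d T i j := by
        unfold padE
        rw [dif_pos htog]
        have hjeq : (⟨(i : ℕ) + n - d, by have := i.isLt; omega⟩ : Fin (a + n)) = j :=
          Fin.ext (by simp only [Fin.val_mk]; omega)
        rw [hjeq]
        simp only [tog]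
        rw [if_pos hj]
      have hpad2 : padE a n c T i d = (T i j : ℕ) := by
        unfold padE
        rw [dif_pos htog]
        have hjeq : (⟨(i : ℕ) + n - d, by have := i.isLt; omega⟩ : Fin (a + n)) = j :=
          Fin.ext (by simp only [Fin.val_mk]; omega)
        rw [hjeq]
      have hαt : alphaF a n c d T (i : ℕ) = padE a n c T i (d + 1) := alphaF_fin T i
      have hγt : gammaF a n c d T (i : ℕ) = upN a n c T i j := by
        unfold gammaF upN
        by_cases ht0 : (i : ℕ) = 0
        · rw [if_pos ht0, dif_neg (by omega)]
        · rw [if_neg ht0, dif_pos (by have := i.isLt; omega), dif_pos (by omega)]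
          unfold padE
          rw [dif_pos (by simp only [Fin.val_mk]; omega)]
          have e1 : (⟨(i : ℕ) - 1, by have := i.isLt; omega⟩ : Fin a)
              = ⟨(i : ℕ) - 1, by have := i.isLt; omega⟩ := rfl
          have e2 : (⟨(i : ℕ) - 1 + n - (d - 1), by have := i.isLt; omega⟩ : Fin (a + n)) = j :=
            Fin.ext (by simp only [Fin.val_mk]; omega)
          rw [e2]
      have hγt1 : gammaF a n c d T ((i : ℕ) + 1) = padE a n c T i (d - 1) := gammaF_fin T i
      have hpadB : padE a n c T i (d - 1) = padE a n c T i (d - 1) := rfl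
      have hαt1 : alphaF a n c d T ((i : ℕ) + 1) = dnN a n c T i j := by
        unfold alphaF dnN
        by_cases hta : (i : ℕ) + 1 < a
        · rw [dif_pos hta, dif_pos hta]
          unfold padE
          rw [dif_pos (by simp only [Fin.val_mk]; omega)]
          have e2 : (⟨(i : ℕ) + 1 + n - (d + 1), by omega⟩ : Fin (a + n)) = j :=
            Fin.ext (by simp only [Fin.val_mk]; omega)
          rw [e2]
        · rw [dif_neg hta, dif_neg hta]
      rw [hpad1, hpad2, hαt, hγt, hγt1, hαt1, togVal_eq hT hd hj]
      have h1 : (T i j : ℕ) ≤ min (padE a n c T i (d + 1)) (upN a n c T i j) :=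
        le_min (le_tA hT hj) (le_tU hT hd hj)
      omega
    · -- no cell in this row: everything is padding
      push_neg at htog
      have hpad1 : padE a n c (tog a n c d T) i d = c := by
        unfold padE; rw [dif_neg (by omega)]
      have hpad2 : padE a n c T i d = c := by
        unfold padE; rw [dif_neg (by omega)]
      have hαt : alphaF a n c d T (i : ℕ) = c := by
        rw [alphaF_fin T i]
        unfold padE; rw [dif_neg (by omega)]
      have hγt : gammaF a n c d T (i : ℕ) = c := by
        unfold gammaF
        by_cases ht0 : (i : ℕ) = 0
        · rw [if_pos ht0]
        · rw [if_neg ht0, dif_pos (by have := i.isLt; omega)]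
          unfold padE; rw [dif_neg (by simp only [Fin.val_mk]; omega)]
      have hγt1 : gammaF a n c d T ((i : ℕ) + 1) ≤ c := by
        rw [gammaF_fin T i]
        exact padE_le T i (d - 1)
      have hαt1 : alphaF a n c d T ((i : ℕ) + 1) = c := by
        have hta : (i : ℕ) + 1 < a := by have := i.isLt; omega
        unfold alphaF
        rw [dif_pos hta]
        unfold padE; rw [dif_neg (by simp only [Fin.val_mk]; omega)]
      rw [hpad1, hpad2, hαt, hγt, hαt1]
      omega
  unfold Dt
  rw [← Finset.sum_add_distrib, Finset.sum_congr rfl fun i _ => hrow i]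
  have cv1 : ∑ i : Fin a,
      (min (alphaF a n c d T (i : ℕ)) (gammaF a n c d T (i : ℕ))
        + max (gammaF a n c d T ((i : ℕ) + 1)) (alphaF a n c d T ((i : ℕ) + 1)))
      = ∑ t ∈ range a,
          (min (alphaF a n c d T t) (gammaF a n c d T t)
            + max (gammaF a n c d T (t + 1)) (alphaF a n c d T (t + 1))) :=
    Fin.sum_univ_eq_sum_range (fun t =>
      min (alphaF a n c d T t) (gammaF a n c d T t)
        + max (gammaF a n c d T (t + 1)) (alphaF a n c d T (t + 1))) a
  rw [cv1, teleN a c (alphaF a n c d T) (gammaF a n c d T) (gammaF_zero T)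
    (by unfold alphaF; rw [dif_pos ha]; exact padE_le _ _ _) (alphaF_top T),
    Finset.sum_add_distrib]
  congr 1
  · rw [← Fin.sum_univ_eq_sum_range (fun t => alphaF a n c d T t) a]
    exact Finset.sum_congr rfl fun i _ => alphaF_fin T i
  · rw [← Fin.sum_univ_eq_sum_range (fun t => gammaF a n c d T (t + 1)) a]
    exact Finset.sum_congr rfl fun i _ => gammaF_fin T i

lemma Dt_zero {k : Fin a → ℕ} {T : Fin a → Fin (a + n) → Fin (c + 1)}
    (hT : T ∈ Arrays a n c k) : Dt a n c T 0 = ∑ i : Fin a, k i := by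
  unfold Dt
  refine Finset.sum_congr rfl fun i _ => ?_
  unfold padE
  rw [dif_pos (Nat.zero_le _)]
  have e : (⟨(i : ℕ) + n - 0, by have := i.isLt; omega⟩ : Fin (a + n))
      = ⟨(i : ℕ) + n, Nat.add_lt_add_right i.isLt n⟩ := Fin.ext (by simp)
  rw [e, bdry hT i]

lemma Dt_top (T : Fin a → Fin (a + n) → Fin (c + 1)) : Dt a n c T (a + n) = a * c := by
  unfold Dt
  have : ∀ i : Fin a, padE a n c T i (a + n) = c := fun i => by
    unfold padE; rw [dif_neg (by have := i.isLt; omega)]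
  rw [Finset.sum_congr rfl fun i _ => this i, Finset.sum_const, Finset.card_univ,
    Fintype.card_fin, smul_eq_mul]

/-- ℕ-valued entry with out-of-range guard. -/
def entN (a n c : ℕ) (T : Fin a → Fin (a + n) → Fin (c + 1)) (i : Fin a) (j : ℕ) : ℕ :=
  if h : j < a + n then (T i ⟨j, h⟩ : ℕ) else 0

lemma sum_padE_row (T : Fin a → Fin (a + n) → Fin (c + 1)) (i : Fin a) :
    ∑ e ∈ Ico 1 (a + n), padE a n c T i e
      = (∑ j ∈ range ((i : ℕ) + n), entN a n c T i j) + c * (a - 1 - (i : ℕ)) := by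
  have hi := i.isLt
  have hsplit : ∑ e ∈ Ico 1 ((i : ℕ) + n + 1), padE a n c T i e
      + ∑ e ∈ Ico ((i : ℕ) + n + 1) (a + n), padE a n c T i e
      = ∑ e ∈ Ico 1 (a + n), padE a n c T i e :=
    Finset.sum_Ico_consecutive _ (by omega) (by omega)
  rw [← hsplit]
  congr 1
  · -- the real entries, reindexed
    refine Finset.sum_nbij' (i := fun e => (i : ℕ) + n - e) (j := fun j => (i : ℕ) + n - j)
      ?_ ?_ ?_ ?_ ?_
    · intro e he
      rw [Finset.mem_Ico] at he
      rw [Finset.mem_range]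
      omega
    · intro j hj
      rw [Finset.mem_range] at hj
      rw [Finset.mem_Ico]
      omega
    · intro e he
      rw [Finset.mem_Ico] at he
      omega
    · intro j hj
      rw [Finset.mem_range] at hj
      omega
    · intro e he
      rw [Finset.mem_Ico] at he
      unfold padE entN
      rw [dif_pos (by omega), dif_pos (by omega)]
  · -- the padding
    have hval : ∀ e ∈ Ico ((i : ℕ) + n + 1) (a + n), padE a n c T i e = c := by
      intro e he
      rw [Finset.mem_Ico] at he
      unfold padE
      rw [dif_neg (by omega)]
    rw [Finset.sum_congr rfl hval, Finset.sum_const, Nat.card_Ico, smul_eq_mul]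
    have hcard : a + n - ((i : ℕ) + n + 1) = a - 1 - (i : ℕ) := by omega
    rw [hcard, mul_comm]

lemma intSum_eq (T : Fin a → Fin (a + n) → Fin (c + 1)) :
    ∑ p ∈ univ.filter (fun p : Fin a × Fin (a + n) => (p.2 : ℕ) < (p.1 : ℕ) + n),
        (T p.1 p.2 : ℕ)
      = ∑ i : Fin a, ∑ j ∈ range ((i : ℕ) + n), entN a n c T i j := by
  classical
  rw [Finset.sum_filter, Fintype.sum_prod_type]
  refine Finset.sum_congr rfl fun i _ => ?_
  have hfn : ∀ j : Fin (a + n),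
      (if (j : ℕ) < (i : ℕ) + n then (T i j : ℕ) else 0)
        = (fun t => if t < (i : ℕ) + n then entN a n c T i t else 0) (j : ℕ) := by
    intro j
    simp only [entN]
    rw [dif_pos j.isLt, Fin.eta]
  rw [Finset.sum_congr rfl fun j _ => hfn j,
    Fin.sum_univ_eq_sum_range (fun t => if t < (i : ℕ) + n then entN a n c T i t else 0) (a + n)]
  rw [← Finset.sum_subset
    (Finset.range_subset_range.mpr (show (i : ℕ) + n ≤ a + n by have := i.isLt; omega))
    (fun x _ hx => by rw [if_neg (by rw [Finset.mem_range] at hx; omega)])]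
  refine Finset.sum_congr rfl fun t ht => ?_
  rw [Finset.mem_range] at ht
  rw [if_pos ht]

lemma sum_Dt_interval (T : Fin a → Fin (a + n) → Fin (c + 1)) :
    ∑ e ∈ Ico 1 (a + n), Dt a n c T e
      = (∑ p ∈ univ.filter (fun p : Fin a × Fin (a + n) => (p.2 : ℕ) < (p.1 : ℕ) + n),
          (T p.1 p.2 : ℕ))
        + c * (∑ i : Fin a, (a - 1 - (i : ℕ))) := by
  unfold Dt
  rw [Finset.sum_comm, intSum_eq T, Finset.mul_sum, ← Finset.sum_add_distrib]
  exact Finset.sum_congr rfl fun i _ => sum_padE_row T i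

end AES

theorem array_entry_sum (a n c : ℕ) (ha : 0 < a) (hn : 0 < n) (hc : 0 < c)
    (k : Fin a → ℕ) (hdec : ∀ i j : Fin a, i ≤ j → k j ≤ k i)
    (hpos : ∀ i, 1 ≤ k i) (hle : ∀ i, k i ≤ c) :
    2 * (∑ T ∈ Arrays a n c k,
          ∑ p ∈ univ.filter (fun p : Fin a × Fin (a + n) => (p.2 : ℕ) < (p.1 : ℕ) + n),
            (T p.1 p.2 : ℕ))
      = (Arrays a n c k).card * (n * a * c + (a + n - 1) * ∑ i, k i) := by
  classical
  set F : ℕ → ℤ := fun e => ∑ T ∈ Arrays a n c k, (AES.Dt a n c T e : ℤ) with hF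
  have hm1 : 1 ≤ a + n := by omega
  -- the two-term recurrence coming from the diagonal toggles
  have hrec : ∀ d : ℕ, 1 ≤ d → d + 1 ≤ a + n → F (d + 1) + F (d - 1) = 2 * F d := by
    intro d h1 h2
    have step1 : F (d + 1) + F (d - 1)
        = ∑ T ∈ Arrays a n c k,
            ((AES.Dt a n c (AES.tog a n c d T) d : ℤ) + (AES.Dt a n c T d : ℤ)) := by
      rw [hF]
      simp only []
      rw [← Finset.sum_add_distrib]
      refine Finset.sum_congr rfl fun T hT => ?_
      have hk := AES.key_id hT h1 h2 ha
      exact_mod_cast hk.symm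
    have step2 : ∑ T ∈ Arrays a n c k, (AES.Dt a n c (AES.tog a n c d T) d : ℤ)
        = ∑ T ∈ Arrays a n c k, (AES.Dt a n c T d : ℤ) := by
      refine Finset.sum_nbij' (i := fun T => AES.tog a n c d T)
        (j := fun T => AES.tog a n c d T) ?_ ?_ ?_ ?_ ?_
      · intro T hT; exact AES.tog_mem hT h1
      · intro T hT; exact AES.tog_mem hT h1
      · intro T hT; exact AES.tog_tog hT h1
      · intro T hT; exact AES.tog_tog hT h1
      · intro T hT; rfl
    rw [step1, Finset.sum_add_distrib, step2]
    rw [hF]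
    ring
  -- the sequence F is arithmetic
  have hstep : ∀ d : ℕ, d + 1 ≤ a + n → F (d + 1) - F d = F 1 - F 0 := by
    intro d
    induction d with
    | zero => intro _; rfl
    | succ e ih =>
      intro h
      have h1 := hrec (e + 1) (by omega) (by omega)
      have h2 := ih (by omega)
      simp only [Nat.add_sub_cancel] at h1
      linarith
  have hlin : ∀ d : ℕ, d ≤ a + n → F d = F 0 + (d : ℤ) * (F 1 - F 0) := by
    intro d
    induction d with
    | zero => intro _; push_cast; ring
    | succ e ih =>
      intro h
      have h1 := hstep e (by omega)
      have h2 := ih (by omega)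
      push_cast
      push_cast at h2
      linarith
  -- boundary values of F
  have hF0 : F 0 = ((Arrays a n c k).card : ℤ) * (∑ i, (k i : ℤ)) := by
    rw [hF]
    simp only []
    rw [Finset.sum_congr rfl fun T hT =>
      (show ((AES.Dt a n c T 0 : ℕ) : ℤ) = ((∑ i, k i : ℕ) : ℤ) from
        congrArg _ (AES.Dt_zero hT))]
    rw [Finset.sum_const, nsmul_eq_mul]
    push_cast
    ring
  have hFm : F (a + n) = ((Arrays a n c k).card : ℤ) * ((a : ℤ) * (c : ℤ)) := by
    rw [hF]
    simp only []
    rw [Finset.sum_congr rfl fun T _ =>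
      (show ((AES.Dt a n c T (a + n) : ℕ) : ℤ) = ((a * c : ℕ) : ℤ) from
        congrArg _ (AES.Dt_top T))]
    rw [Finset.sum_const, nsmul_eq_mul]
    push_cast
    ring
  -- the sum of F over the interior diagonals
  have hIco : ∑ e ∈ Ico 1 (a + n), F e
      = (∑ T ∈ Arrays a n c k, ∑ p ∈ univ.filter
            (fun p : Fin a × Fin (a + n) => (p.2 : ℕ) < (p.1 : ℕ) + n),
            ((T p.1 p.2 : ℕ) : ℤ))
        + ((Arrays a n c k).card : ℤ)
            * ((c : ℤ) * (∑ i : Fin a, ((a - 1 - (i : ℕ) : ℕ) : ℤ))) := by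
    rw [hF]
    simp only []
    rw [Finset.sum_comm]
    have perT : ∀ T ∈ Arrays a n c k,
        ∑ e ∈ Ico 1 (a + n), ((AES.Dt a n c T e : ℕ) : ℤ)
        = (∑ p ∈ univ.filter
            (fun p : Fin a × Fin (a + n) => (p.2 : ℕ) < (p.1 : ℕ) + n),
            ((T p.1 p.2 : ℕ) : ℤ))
          + (c : ℤ) * (∑ i : Fin a, ((a - 1 - (i : ℕ) : ℕ) : ℤ)) := by
      intro T _
      have h := AES.sum_Dt_interval (a := a) (n := n) (c := c) T
      have h2 := congrArg (fun t : ℕ => (t : ℤ)) h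
      push_cast at h2
      linarith [h2]
    rw [Finset.sum_congr rfl perT, Finset.sum_add_distrib, Finset.sum_const, nsmul_eq_mul]
    try ring
  -- Gauss sums
  have hgaussN : (∑ e ∈ Ico 1 (a + n), e) * 2 = (a + n) * (a + n - 1) := by
    have h0 : ∑ e ∈ range (a + n), e = ∑ e ∈ Ico 1 (a + n), e := by
      rw [Finset.range_eq_Ico, ← Finset.sum_Ico_consecutive _ (Nat.zero_le 1) hm1]
      simp
    rw [← h0]
    exact Finset.sum_range_id_mul_two (a + n)
  have hs : 2 * (∑ e ∈ Ico 1 (a + n), (e : ℤ))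
      = ((a : ℤ) + (n : ℤ)) * (((a : ℤ) + (n : ℤ)) - 1) := by
    have h2 := congrArg (fun t : ℕ => (t : ℤ)) hgaussN
    push_cast [Nat.cast_sub hm1] at h2
    linarith [h2]
  have hCTN : (∑ i : Fin a, (a - 1 - (i : ℕ))) * 2 = a * (a - 1) := by
    rw [Fin.sum_univ_eq_sum_range (fun t => a - 1 - t) a]
    rw [show (∑ t ∈ range a, (a - 1 - t)) = ∑ t ∈ range a, t from
      Finset.sum_range_reflect (fun j => j) a]
    exact Finset.sum_range_id_mul_two a
  have hCT : 2 * (∑ i : Fin a, ((a - 1 - (i : ℕ) : ℕ) : ℤ)) = (a : ℤ) * ((a : ℤ) - 1) := by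
    have h2 := congrArg (fun t : ℕ => (t : ℤ)) hCTN
    push_cast [Nat.cast_sub ha] at h2
    linarith [h2]
  -- evaluate the interior sum of F linearly
  have hsum_lin : ∑ e ∈ Ico 1 (a + n), F e
      = (((a : ℤ) + (n : ℤ)) - 1) * F 0
        + (∑ e ∈ Ico 1 (a + n), (e : ℤ)) * (F 1 - F 0) := by
    have hcongr : ∑ e ∈ Ico 1 (a + n), F e
        = ∑ e ∈ Ico 1 (a + n), (F 0 + (e : ℤ) * (F 1 - F 0)) := by
      apply Finset.sum_congr rfl
      intro e he
      rw [Finset.mem_Ico] at he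
      exact hlin e (Nat.le_of_lt he.2)
    rw [hcongr, Finset.sum_add_distrib, Finset.sum_const, Nat.card_Ico, nsmul_eq_mul,
      ← Finset.sum_mul]
    push_cast [Nat.cast_sub hm1]
    ring
  have hDelta : ((a : ℤ) + (n : ℤ)) * (F 1 - F 0)
      = ((Arrays a n c k).card : ℤ) * ((a : ℤ) * (c : ℤ))
        - ((Arrays a n c k).card : ℤ) * (∑ i, (k i : ℤ)) := by
    have h1 := hlin (a + n) le_rfl
    push_cast at h1
    linear_combination hFm - hF0 - h1
  -- put everything together over ℤ
  have main : 2 * (∑ T ∈ Arrays a n c k, ∑ p ∈ univ.filter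
        (fun p : Fin a × Fin (a + n) => (p.2 : ℕ) < (p.1 : ℕ) + n),
        ((T p.1 p.2 : ℕ) : ℤ))
      = ((Arrays a n c k).card : ℤ) * ((n : ℤ) * (a : ℤ) * (c : ℤ)
          + (((a : ℤ) + (n : ℤ)) - 1) * (∑ i, (k i : ℤ))) := by
    have e5 : (∑ T ∈ Arrays a n c k, ∑ p ∈ univ.filter
          (fun p : Fin a × Fin (a + n) => (p.2 : ℕ) < (p.1 : ℕ) + n),
          ((T p.1 p.2 : ℕ) : ℤ))
        = (∑ e ∈ Ico 1 (a + n), F e)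
          - ((Arrays a n c k).card : ℤ)
              * ((c : ℤ) * (∑ i : Fin a, ((a - 1 - (i : ℕ) : ℕ) : ℤ))) := by
      linarith [hIco]
    rw [e5, hsum_lin]
    linear_combination (F 1 - F 0) * hs + (((a : ℤ) + (n : ℤ)) - 1) * hDelta
      + (2 * (((a : ℤ) + (n : ℤ)) - 1)) * hF0
      - (((Arrays a n c k).card : ℤ) * (c : ℤ)) * hCT
  -- conclude in ℕ
  have cast1 : ((2 * (∑ T ∈ Arrays a n c k,
        ∑ p ∈ univ.filter (fun p : Fin a × Fin (a + n) => (p.2 : ℕ) < (p.1 : ℕ) + n),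
        (T p.1 p.2 : ℕ)) : ℕ) : ℤ)
      = (((Arrays a n c k).card * (n * a * c + (a + n - 1) * ∑ i, k i) : ℕ) : ℤ) := by
    push_cast [Nat.cast_sub hm1]
    linarith [main]
  exact_mod_cast cast1
end

section
/- Let a, b, c be positive integers. The expected value of the bottom-left corner entry T(a,1) of a uniformly random plane partition T in an a×b×c box equals b·c/(a+b); equivalently, (a+b) · Σ_T T(a,1) = b·c · N(a,b,c), the sum being over all plane partitions T in the a×b×c box. -/
open Finset

/-- Plane partitions in an `a × b × c` box: assignments of entries in `{0, …, c}` to the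
cells of an `a × b` rectangle with weakly decreasing rows and columns. -/
def PlanePartitions (a b c : ℕ) : Finset (Fin a → Fin b → Fin (c + 1)) :=
  univ.filter (fun T =>
    (∀ i : Fin a, ∀ j j' : Fin b, j ≤ j' → T i j' ≤ T i j) ∧
    (∀ i i' : Fin a, ∀ j : Fin b, i ≤ i' → T i' j ≤ T i j))

/-- The entry `T(i, j)` of a plane partition at the 1-based cell `(i, j)`. -/
def entry (a b c : ℕ) (T : Fin a → Fin b → Fin (c + 1)) (i j : ℕ) : ℕ :=
  if h : 1 ≤ i ∧ i ≤ a ∧ 1 ≤ j ∧ j ≤ b then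
    (T ⟨i - 1, by omega⟩ ⟨j - 1, by omega⟩ : ℕ)
  else 0

/-- `E a b c i j` is the expected value of the entry at the 1-based cell `(i, j)` of a
uniformly random plane partition in an `a × b × c` box. -/
def E (a b c i j : ℕ) : ℚ :=
  (∑ T ∈ PlanePartitions a b c, (entry a b c T i j : ℚ))
    / ((PlanePartitions a b c).card : ℚ)
section Aux
variable {a b c : ℕ}

/-- down-closed subsets of `Fin n` are initial segments -/
lemma downset_mem_iff {n : ℕ} (S : Finset (Fin n))
    (h : ∀ i j : Fin n, i ≤ j → j ∈ S → i ∈ S) (i : Fin n) :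
    i ∈ S ↔ (i : ℕ) < S.card := by
  constructor
  · intro hi
    have hsub : Finset.Iic i ⊆ S := fun x hx => h x i (Finset.mem_Iic.mp hx) hi
    have := Finset.card_le_card hsub
    rw [Fin.card_Iic] at this
    omega
  · intro hi
    by_contra hns
    have hsub : S ⊆ Finset.Iio i := by
      intro x hx
      rw [Finset.mem_Iio]
      rcases lt_or_ge x i with h1 | h1
      · exact h1
      · exact absurd (h i x h1 hx) hns
    have := Finset.card_le_card hsub
    rw [Fin.card_Iio] at this
    omega

/-- down-closed subsets of `Icc 1 c` in ℕ are initial segments -/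
lemma downsetIcc_mem_iff (S : Finset ℕ) (hS : S ⊆ Finset.Icc 1 c)
    (h : ∀ k k' : ℕ, 1 ≤ k → k ≤ k' → k' ∈ S → k ∈ S) (k : ℕ) (hk : k ∈ Finset.Icc 1 c) :
    k ∈ S ↔ k ≤ S.card := by
  rw [Finset.mem_Icc] at hk
  constructor
  · intro hkS
    have hsub : Finset.Icc 1 k ⊆ S := by
      intro x hx
      rw [Finset.mem_Icc] at hx
      exact h x k hx.1 hx.2 hkS
    have := Finset.card_le_card hsub
    rw [Nat.card_Icc] at this
    omega
  · intro hc'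
    by_contra hns
    have hsub : S ⊆ Finset.Icc 1 (k - 1) := by
      intro x hx
      have hx1 := hS hx
      rw [Finset.mem_Icc] at hx1 ⊢
      refine ⟨hx1.1, ?_⟩
      rcases le_or_gt x (k-1) with h1 | h1
      · exact h1
      · exact absurd (h k x hk.1 (by omega) hx) hns
    have := Finset.card_le_card hsub
    rw [Nat.card_Icc] at this
    omega

lemma card_filter_lt_fin {n v : ℕ} :
    (Finset.univ.filter fun i : Fin n => (i : ℕ) < v).card = min v n := by
  classical
  have himg : (Finset.univ.filter fun i : Fin n => (i : ℕ) < v).image (Fin.val) =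
      Finset.range (min v n) := by
    ext x
    simp only [Finset.mem_image, Finset.mem_filter, Finset.mem_univ, true_and,
      Finset.mem_range, lt_min_iff]
    constructor
    · rintro ⟨i, hi, rfl⟩; exact ⟨hi, i.isLt⟩
    · rintro ⟨h1, h2⟩; exact ⟨⟨x, h2⟩, h1, rfl⟩
  have := Finset.card_image_of_injective
    (Finset.univ.filter fun i : Fin n => (i : ℕ) < v) (Fin.val_injective)
  rw [himg, Finset.card_range] at this
  omega

lemma card_filter_Ico_fin {n lo hi : ℕ} (h1 : lo ≤ hi) (h2 : hi ≤ n) :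
    (Finset.univ.filter fun i : Fin n => lo ≤ (i : ℕ) ∧ (i : ℕ) < hi).card = hi - lo := by
  classical
  have he : (Finset.univ.filter fun i : Fin n => lo ≤ (i : ℕ) ∧ (i : ℕ) < hi) =
      (Finset.univ.filter fun i : Fin n => (i : ℕ) < hi) \
      (Finset.univ.filter fun i : Fin n => (i : ℕ) < lo) := by
    ext i; simp only [Finset.mem_filter, Finset.mem_sdiff, Finset.mem_univ, true_and]; omega
  rw [he, Finset.card_sdiff_of_subset]
  · rw [card_filter_lt_fin, card_filter_lt_fin]; omega
  · intro i hmem; simp only [Finset.mem_filter, Finset.mem_univ, true_and] at hmem ⊢; omega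

end Aux
section Core
variable {a b c : ℕ}

/-- row count: number of entries `≥ k` in row `i` -/
def rc (T : Fin a → Fin b → Fin (c+1)) (k : ℕ) (i : Fin a) : ℕ :=
  (Finset.univ.filter fun j : Fin b => k ≤ (T i j : ℕ)).card

/-- diagonal counting function -/
def gg (T : Fin a → Fin b → Fin (c+1)) (m k : ℕ) : ℕ :=
  (Finset.univ.filter fun i : Fin a => m + (i : ℕ) + 1 ≤ rc T k i + a).card

variable {T : Fin a → Fin b → Fin (c+1)}

def RowM (T : Fin a → Fin b → Fin (c+1)) : Prop :=
  ∀ (i : Fin a) (j j' : Fin b), j ≤ j' → T i j' ≤ T i j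

def ColM (T : Fin a → Fin b → Fin (c+1)) : Prop :=
  ∀ (i i' : Fin a) (j : Fin b), i ≤ i' → T i' j ≤ T i j

lemma rc_le : rc T k i ≤ b := by
  simpa [rc] using Finset.card_filter_le Finset.univ (fun j : Fin b => k ≤ (T i j : ℕ))

lemma rc_anti_k {k k' : ℕ} (h : k ≤ k') : rc T k' i ≤ rc T k i := by
  apply Finset.card_le_card
  intro j hj
  simp only [Finset.mem_filter, Finset.mem_univ, true_and] at hj ⊢
  omega

lemma rc_anti_i (hc : ColM T) {i i' : Fin a} (h : i ≤ i') : rc T k i' ≤ rc T k i := by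
  apply Finset.card_le_card
  intro j hj
  simp only [Finset.mem_filter, Finset.mem_univ, true_and] at hj ⊢
  exact le_trans hj (hc i i' j h)

lemma mem_rc (hr : RowM T) (k : ℕ) (i : Fin a) (j : Fin b) :
    k ≤ (T i j : ℕ) ↔ (j : ℕ) < rc T k i := by
  have := downset_mem_iff (Finset.univ.filter fun j : Fin b => k ≤ (T i j : ℕ))
    (fun p q hpq hq => by
      simp only [Finset.mem_filter, Finset.mem_univ, true_and] at hq ⊢
      exact le_trans hq (hr i p q hpq)) j
  simp only [Finset.mem_filter, Finset.mem_univ, true_and] at this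
  rw [this, rc]

lemma gg_zero (k : ℕ) : gg T 0 k = a := by
  have : (Finset.univ.filter fun i : Fin a => 0 + (i : ℕ) + 1 ≤ rc T k i + a) = Finset.univ := by
    ext i
    simp only [Finset.mem_filter, Finset.mem_univ, true_and, iff_true]
    have := i.isLt; omega
  rw [gg, this, Finset.card_univ, Fintype.card_fin]

lemma gg_top (k : ℕ) : gg T (a + b) k = 0 := by
  rw [gg, Finset.card_eq_zero]
  ext i
  simp only [Finset.mem_filter, Finset.mem_univ, true_and, Finset.notMem_empty, iff_false]
  have := rc_le (T := T) (k := k) (i := i)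
  omega

lemma gg_le : gg T m k ≤ a := by
  calc gg T m k ≤ Finset.univ.card := Finset.card_filter_le _ _
  _ = a := by rw [Finset.card_univ, Fintype.card_fin]

lemma gg_anti_m {m m' : ℕ} (h : m ≤ m') : gg T m' k ≤ gg T m k := by
  apply Finset.card_le_card
  intro i hi
  simp only [Finset.mem_filter, Finset.mem_univ, true_and] at hi ⊢
  omega

lemma gg_step (hc : ColM T) (m k : ℕ) : gg T m k ≤ gg T (m+1) k + 1 := by
  classical
  have hsub : (Finset.univ.filter fun i : Fin a => m + (i : ℕ) + 1 ≤ rc T k i + a) ⊆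
      (Finset.univ.filter fun i : Fin a => m + 1 + (i : ℕ) + 1 ≤ rc T k i + a) ∪
      (Finset.univ.filter fun i : Fin a => rc T k i + a = m + (i : ℕ) + 1) := by
    intro i hi
    simp only [Finset.mem_filter, Finset.mem_univ, true_and, Finset.mem_union] at hi ⊢
    omega
  have hcard1 : (Finset.univ.filter fun i : Fin a => rc T k i + a = m + (i : ℕ) + 1).card ≤ 1 := by
    rw [Finset.card_le_one]
    intro i hi j hj
    simp only [Finset.mem_filter, Finset.mem_univ, true_and] at hi hj
    rcases le_total i j with h1 | h1
    · have := rc_anti_i (k := k) hc h1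
      have : (i : ℕ) = (j : ℕ) := by omega
      exact Fin.ext this
    · have := rc_anti_i (k := k) hc h1
      have : (i : ℕ) = (j : ℕ) := by omega
      exact Fin.ext this
  calc gg T m k ≤ _ := Finset.card_le_card hsub
  _ ≤ _ + _ := Finset.card_union_le _ _
  _ ≤ gg T (m+1) k + 1 := by rw [gg]; omega

lemma gg_anti_k {k k' : ℕ} (h : k ≤ k') : gg T m k' ≤ gg T m k := by
  apply Finset.card_le_card
  intro i hi
  simp only [Finset.mem_filter, Finset.mem_univ, true_and] at hi ⊢
  have := rc_anti_k (T := T) (i := i) h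
  omega

lemma gg_low (hc : ColM T) (m k : ℕ) : a ≤ gg T m k + m := by
  induction m with
  | zero => simp [gg_zero]
  | succ n ih =>
      have := gg_step hc (T := T) n k
      omega

lemma gg_high (hc : ColM T) (m k : ℕ) (hm : m ≤ a + b) : gg T m k + m ≤ a + b := by
  have key : ∀ d m', gg T m' k ≤ gg T (m' + d) k + d := by
    intro d
    induction d with
    | zero => simp
    | succ n ih =>
        intro m'
        have h1 := ih (m' + 1)
        rw [show m' + 1 + n = m' + (n+1) from by omega] at h1
        have := gg_step hc (T := T) m' k
        omega
  have := key (a + b - m) m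
  rw [show m + (a + b - m) = a + b by omega, gg_top] at this
  omega

/-- reconstruction: the entry values can be read off from `gg` -/
lemma F5 (hr : RowM T) (hc : ColM T) {m k : ℕ} (i : Fin a) (j : Fin b)
    (hm : (j : ℕ) + a = (i : ℕ) + m) :
    (k ≤ (T i j : ℕ) ↔ (i : ℕ) < gg T m k) := by
  have hds := downset_mem_iff (Finset.univ.filter fun i : Fin a => m + (i : ℕ) + 1 ≤ rc T k i + a)
    (fun p q hpq hq => by
      simp only [Finset.mem_filter, Finset.mem_univ, true_and] at hq ⊢
      have := rc_anti_i (k := k) hc hpq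
      omega) i
  simp only [Finset.mem_filter, Finset.mem_univ, true_and] at hds
  rw [mem_rc hr]
  unfold gg
  rw [← hds]
  omega

end Core
section Core2
variable {a b c : ℕ} {T T' : Fin a → Fin b → Fin (c+1)}

lemma anti_of_adj {n : ℕ} (f : Fin n → ℕ)
    (h : ∀ (j : ℕ) (hj : j + 1 < n), f ⟨j+1, hj⟩ ≤ f ⟨j, by omega⟩) :
    ∀ (p q : Fin n), p ≤ q → f q ≤ f p := by
  have key : ∀ (d : ℕ) (p q : Fin n), (q : ℕ) = (p : ℕ) + d → f q ≤ f p := by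
    intro d
    induction d with
    | zero => intro p q hq; have : p = q := Fin.ext (by omega); rw [this]
    | succ n' ih =>
        intro p q hq
        have hlt : (p : ℕ) + n' + 1 < n := by have := q.isLt; omega
        have hlt2 : (p : ℕ) + n' < n := by omega
        have hstep := h ((p : ℕ) + n') hlt
        have hfq : f q = f ⟨(p : ℕ) + n' + 1, hlt⟩ := congrArg f (Fin.ext (by show (q : ℕ) = (p : ℕ) + n' + 1; omega))
        have htail : f ⟨(p : ℕ) + n', hlt2⟩ ≤ f p := ih p ⟨(p : ℕ) + n', hlt2⟩ (by simp)
        exact le_trans (le_of_eq hfq) (le_trans hstep htail)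
  intro p q hpq
  exact key ((q : ℕ) - (p : ℕ)) p q (by rw [Fin.le_def] at hpq; omega)

/-- diagonal form of `gg` -/
lemma F7 (hr : RowM T) (m k : ℕ) :
    gg T m k = (a - m) +
      (Finset.univ.filter fun i : Fin a =>
        ∃ j : Fin b, (j : ℕ) + a = (i : ℕ) + m ∧ k ≤ (T i j : ℕ)).card := by
  classical
  have hsplit : (Finset.univ.filter fun i : Fin a => m + (i : ℕ) + 1 ≤ rc T k i + a) =
      (Finset.univ.filter fun i : Fin a => (i : ℕ) + m + 1 ≤ a) ∪
      (Finset.univ.filter fun i : Fin a =>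
        ∃ j : Fin b, (j : ℕ) + a = (i : ℕ) + m ∧ k ≤ (T i j : ℕ)) := by
    ext i
    simp only [Finset.mem_filter, Finset.mem_univ, true_and, Finset.mem_union]
    constructor
    · intro hP
      rcases le_or_gt ((i : ℕ) + m + 1) a with h1 | h1
      · exact Or.inl h1
      · right
        have hrcb := rc_le (T := T) (k := k) (i := i)
        have hj0 : (i : ℕ) + m - a < b := by omega
        refine ⟨⟨(i : ℕ) + m - a, hj0⟩, by simp; omega, ?_⟩
        rw [mem_rc hr]
        simp
        omega
    · intro hQ
      rcases hQ with h1 | ⟨j, hje, hjk⟩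
      · omega
      · rw [mem_rc hr] at hjk
        omega
  have hdisj : Disjoint (Finset.univ.filter fun i : Fin a => (i : ℕ) + m + 1 ≤ a)
      (Finset.univ.filter fun i : Fin a =>
        ∃ j : Fin b, (j : ℕ) + a = (i : ℕ) + m ∧ k ≤ (T i j : ℕ)) := by
    rw [Finset.disjoint_left]
    intro i hi1 hi2
    simp only [Finset.mem_filter, Finset.mem_univ, true_and] at hi1 hi2
    rcases hi2 with ⟨j, hje, _⟩
    omega
  have hcard1 : (Finset.univ.filter fun i : Fin a => (i : ℕ) + m + 1 ≤ a).card = a - m := by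
    have he : (Finset.univ.filter fun i : Fin a => (i : ℕ) + m + 1 ≤ a) =
        (Finset.univ.filter fun i : Fin a => (i : ℕ) < a - m) := by
      ext i; simp only [Finset.mem_filter, Finset.mem_univ, true_and]; omega
    rw [he, card_filter_lt_fin]; omega
  rw [gg, hsplit, Finset.card_union_of_disjoint hdisj, hcard1]

/-- `gg` at column `m` only depends on entries on diagonal `m` -/
lemma gg_offdiag_eq (hr : RowM T) (hr' : RowM T') (m0 : ℕ)
    (hagree : ∀ (i : Fin a) (j : Fin b), (j : ℕ) + a ≠ (i : ℕ) + m0 → T i j = T' i j)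
    (m k : ℕ) (hm : m ≠ m0) : gg T m k = gg T' m k := by
  rw [F7 hr, F7 hr']
  congr 2
  apply Finset.filter_congr
  intro i _
  constructor
  · rintro ⟨j, hje, hjk⟩
    exact ⟨j, hje, by rw [← hagree i j (by omega)]; exact hjk⟩
  · rintro ⟨j, hje, hjk⟩
    exact ⟨j, hje, by rw [hagree i j (by omega)]; exact hjk⟩

lemma card_Icc_filter_le {c v : ℕ} (hv : v ≤ c) :
    ((Finset.Icc 1 c).filter fun k => k ≤ v).card = v := by
  have he : ((Finset.Icc 1 c).filter fun k => k ≤ v) = Finset.Icc 1 v := by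
    ext x; simp only [Finset.mem_filter, Finset.mem_Icc]; omega
  rw [he, Nat.card_Icc]
  omega

lemma val_eq_card (i : Fin a) (j : Fin b) :
    (T i j : ℕ) = ((Finset.Icc 1 c).filter fun k => k ≤ (T i j : ℕ)).card := by
  have := (T i j).isLt
  rw [card_Icc_filter_le (by omega)]

/-- entry as count of levels, via `gg` -/
lemma entry_eq_card_gg (hr : RowM T) (hc : ColM T) {m : ℕ} (i : Fin a) (j : Fin b)
    (hm : (j : ℕ) + a = (i : ℕ) + m) :
    (T i j : ℕ) = ((Finset.Icc 1 c).filter fun k => (i : ℕ) < gg T m k).card := by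
  rw [val_eq_card]
  congr 1
  apply Finset.filter_congr
  intro k _
  exact F5 hr hc i j hm

end Core2
section Invol
variable {a b c : ℕ}

/-- the "run" of `k`: levels with the same neighboring column values -/
def runS (T : Fin a → Fin b → Fin (c+1)) (m k : ℕ) : Finset ℕ :=
  insert k ((Finset.Icc 1 c).filter fun k' =>
    gg T m k' = gg T m k ∧ gg T (m+2) k' = gg T (m+2) k)

lemma runS_ne (T : Fin a → Fin b → Fin (c+1)) (m k : ℕ) : (runS T m k).Nonempty :=
  ⟨k, Finset.mem_insert_self k _⟩

/-- reflection within the run -/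
def sig (T : Fin a → Fin b → Fin (c+1)) (m k : ℕ) : ℕ :=
  (runS T m k).min' (runS_ne T m k) + (runS T m k).max' (runS_ne T m k) - k

def Lf (T : Fin a → Fin b → Fin (c+1)) (m k : ℕ) : ℕ :=
  max (gg T m k - 1) (gg T (m+2) k)

def Uf (T : Fin a → Fin b → Fin (c+1)) (m k : ℕ) : ℕ :=
  min (gg T m k) (gg T (m+2) k + 1)

def Rx (T : Fin a → Fin b → Fin (c+1)) (m k : ℕ) : ℕ :=
  Lf T m k + Uf T m k - gg T (m+1) (sig T m k)

/-- the toggling involution: replace the entries on diagonal `m+1` -/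
def Phi (T : Fin a → Fin b → Fin (c+1)) (m : ℕ) : Fin a → Fin b → Fin (c+1) := fun i j =>
  if (j : ℕ) + a = (i : ℕ) + (m+1) then
    ⟨((Finset.Icc 1 c).filter fun k => (i : ℕ) < Rx T m k).card, by
      have h1 := Finset.card_filter_le (Finset.Icc 1 c) (fun k => (i : ℕ) < Rx T m k)
      rw [Nat.card_Icc] at h1
      omega⟩
  else T i j

variable {T : Fin a → Fin b → Fin (c+1)} {m k : ℕ}

lemma min'_congr {S S' : Finset ℕ} (h : S = S') (hS : S.Nonempty) (hS' : S'.Nonempty) :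
    S.min' hS = S'.min' hS' := by subst h; rfl

lemma max'_congr {S S' : Finset ℕ} (h : S = S') (hS : S.Nonempty) (hS' : S'.Nonempty) :
    S.max' hS = S'.max' hS' := by subst h; rfl

lemma runS_eq_filter (hk : k ∈ Finset.Icc 1 c) :
    runS T m k = (Finset.Icc 1 c).filter fun k' =>
      gg T m k' = gg T m k ∧ gg T (m+2) k' = gg T (m+2) k := by
  rw [runS, Finset.insert_eq_self]
  exact Finset.mem_filter.mpr ⟨hk, rfl, rfl⟩

lemma runS_spec (hk : k ∈ Finset.Icc 1 c) :
    ∀ t ∈ runS T m k, t ∈ Finset.Icc 1 c ∧ gg T m t = gg T m k ∧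
      gg T (m+2) t = gg T (m+2) k := by
  intro t ht
  rw [runS_eq_filter hk] at ht
  exact Finset.mem_filter.mp ht |>.imp id id

lemma runS_min_le : (runS T m k).min' (runS_ne T m k) ≤ k :=
  Finset.min'_le _ _ (Finset.mem_insert_self k _)

lemma runS_le_max : k ≤ (runS T m k).max' (runS_ne T m k) :=
  Finset.le_max' _ _ (Finset.mem_insert_self k _)

lemma runS_interval (hk : k ∈ Finset.Icc 1 c) :
    ∀ t : ℕ, (runS T m k).min' (runS_ne T m k) ≤ t →
      t ≤ (runS T m k).max' (runS_ne T m k) → t ∈ runS T m k := by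
  intro t h1 h2
  have hmin := runS_spec hk _ (Finset.min'_mem (runS T m k) (runS_ne T m k))
  have hmax := runS_spec hk _ (Finset.max'_mem (runS T m k) (runS_ne T m k))
  have hb1 : 1 ≤ (runS T m k).min' (runS_ne T m k) := (Finset.mem_Icc.mp hmin.1).1
  have hb2 : (runS T m k).max' (runS_ne T m k) ≤ c := (Finset.mem_Icc.mp hmax.1).2
  rw [runS_eq_filter hk]
  refine Finset.mem_filter.mpr ⟨Finset.mem_Icc.mpr ⟨by omega, by omega⟩, ?_, ?_⟩
  · have l1 : gg T m t ≤ gg T m ((runS T m k).min' (runS_ne T m k)) := gg_anti_k h1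
    have l2 : gg T m ((runS T m k).max' (runS_ne T m k)) ≤ gg T m t := gg_anti_k h2
    omega
  · have l1 : gg T (m+2) t ≤ gg T (m+2) ((runS T m k).min' (runS_ne T m k)) := gg_anti_k h1
    have l2 : gg T (m+2) ((runS T m k).max' (runS_ne T m k)) ≤ gg T (m+2) t := gg_anti_k h2
    omega

lemma sig_mem (hk : k ∈ Finset.Icc 1 c) : sig T m k ∈ runS T m k := by
  have h1 := runS_min_le (T := T) (m := m) (k := k)
  have h2 := runS_le_max (T := T) (m := m) (k := k)
  exact runS_interval hk _ (by rw [sig]; omega) (by rw [sig]; omega)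

lemma sig_spec (hk : k ∈ Finset.Icc 1 c) :
    sig T m k ∈ Finset.Icc 1 c ∧ gg T m (sig T m k) = gg T m k ∧
      gg T (m+2) (sig T m k) = gg T (m+2) k :=
  runS_spec hk _ (sig_mem hk)

lemma runS_congr (hk : k ∈ Finset.Icc 1 c) {k2 : ℕ} (hk2 : k2 ∈ runS T m k) :
    runS T m k2 = runS T m k := by
  obtain ⟨hk2i, he1, he2⟩ := runS_spec hk k2 hk2
  rw [runS_eq_filter hk, runS_eq_filter hk2i]
  apply Finset.filter_congr
  intro t _
  rw [he1, he2]

lemma sig_sig (hk : k ∈ Finset.Icc 1 c) : sig T m (sig T m k) = k := by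
  have h0 := sig_mem (T := T) (m := m) hk
  have h1 := runS_congr hk h0
  have h2 := runS_min_le (T := T) (m := m) (k := k)
  have h3 := runS_le_max (T := T) (m := m) (k := k)
  have hm1 := min'_congr h1 (runS_ne T m (sig T m k)) (runS_ne T m k)
  have hm2 := max'_congr h1 (runS_ne T m (sig T m k)) (runS_ne T m k)
  have h4 := runS_min_le (T := T) (m := m) (k := sig T m k)
  have h5 := runS_le_max (T := T) (m := m) (k := sig T m k)
  conv_lhs => rw [sig]
  rw [hm1, hm2, sig]
  omega

lemma Lf_congr {k2 : ℕ} (h1 : gg T m k2 = gg T m k) (h2 : gg T (m+2) k2 = gg T (m+2) k) :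
    Lf T m k2 = Lf T m k := by rw [Lf, Lf, h1, h2]

lemma Uf_congr {k2 : ℕ} (h1 : gg T m k2 = gg T m k) (h2 : gg T (m+2) k2 = gg T (m+2) k) :
    Uf T m k2 = Uf T m k := by rw [Uf, Uf, h1, h2]

lemma xbound (hc : ColM T) (m k : ℕ) :
    Lf T m k ≤ gg T (m+1) k ∧ gg T (m+1) k ≤ Uf T m k := by
  have h1 := gg_step hc (T := T) m k
  have h2 : gg T (m+1) k ≤ gg T (m+2) k + 1 := by
    have := gg_step hc (T := T) (m+1) k
    rwa [show m+1+1 = m+2 by omega] at this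
  have h3 : gg T (m+2) k ≤ gg T (m+1) k := gg_anti_m (by omega)
  have h4 : gg T (m+1) k ≤ gg T m k := gg_anti_m (by omega)
  rw [Lf, Uf]
  omega

lemma Rx_bound (hc : ColM T) (hk : k ∈ Finset.Icc 1 c) :
    Lf T m k ≤ Rx T m k ∧ Rx T m k ≤ Uf T m k := by
  obtain ⟨hs, he1, he2⟩ := sig_spec (T := T) (m := m) hk
  have hb := xbound hc (T := T) m (sig T m k)
  rw [Lf_congr he1 he2, Uf_congr he1 he2] at hb
  rw [Rx]
  rw [Lf, Uf] at *
  omega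

lemma Rx_anti (hcm : ColM T) {k k' : ℕ} (hk : k ∈ Finset.Icc 1 c)
    (hk' : k' ∈ Finset.Icc 1 c) (hle : k ≤ k') : Rx T m k' ≤ Rx T m k := by
  by_cases hsame : gg T m k' = gg T m k ∧ gg T (m+2) k' = gg T (m+2) k
  · have hk'run : k' ∈ runS T m k := by
      rw [runS_eq_filter hk]; exact Finset.mem_filter.mpr ⟨hk', hsame⟩
    have hrun_eq := runS_congr hk hk'run
    have hL := Lf_congr (T := T) (m := m) (k := k) hsame.1 hsame.2
    have hU := Uf_congr (T := T) (m := m) (k := k) hsame.1 hsame.2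
    have hm1 := min'_congr hrun_eq (runS_ne T m k') (runS_ne T m k)
    have hm2 := max'_congr hrun_eq (runS_ne T m k') (runS_ne T m k)
    have hsigle : sig T m k' ≤ sig T m k := by
      rw [sig, sig, hm1, hm2]
      have h4 := runS_le_max (T := T) (m := m) (k := k')
      have h5 := runS_min_le (T := T) (m := m) (k := k)
      rw [hm2] at h4
      omega
    have hxanti : gg T (m+1) (sig T m k) ≤ gg T (m+1) (sig T m k') := gg_anti_k hsigle
    obtain ⟨hs, he1, he2⟩ := sig_spec (T := T) (m := m) hk
    have hbx := xbound hcm (T := T) m (sig T m k')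
    obtain ⟨hs', he1', he2'⟩ := sig_spec (T := T) (m := m) hk'
    have hU' : Uf T m (sig T m k') = Uf T m k := by rw [Uf_congr he1' he2', hU]
    rw [Rx, Rx, hL, hU]
    omega
  · have hA : gg T m k' ≤ gg T m k := gg_anti_k hle
    have hB : gg T (m+2) k' ≤ gg T (m+2) k := gg_anti_k hle
    have hb1 := Rx_bound (T := T) (m := m) hcm hk
    have hb2 := Rx_bound (T := T) (m := m) hcm hk'
    rw [Lf, Uf] at *
    rcases not_and_or.mp hsame with hne | hne
    · have : gg T m k' < gg T m k := lt_of_le_of_ne hA hne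
      omega
    · have : gg T (m+2) k' < gg T (m+2) k := lt_of_le_of_ne hB hne
      omega

lemma Rx_low (hcm : ColM T) (hk : k ∈ Finset.Icc 1 c) : a ≤ Rx T m k + (m + 1) := by
  have h1 := (Rx_bound (T := T) (m := m) hcm hk).1
  have h2 := gg_low hcm (T := T) m k
  rw [Lf] at h1
  omega

lemma Rx_high (hcm : ColM T) (hm : m + 2 ≤ a + b) (hk : k ∈ Finset.Icc 1 c) :
    Rx T m k + (m + 1) ≤ a + b := by
  have h1 := (Rx_bound (T := T) (m := m) hcm hk).2
  have h2 := gg_high hcm (T := T) (m+2) k hm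
  rw [Uf] at h1
  omega

lemma Rx_le_a (hcm : ColM T) (hk : k ∈ Finset.Icc 1 c) : Rx T m k ≤ a := by
  have h1 := (Rx_bound (T := T) (m := m) hcm hk).2
  have h2 := gg_le (T := T) (m := m) (k := k)
  rw [Uf] at h1
  omega

end Invol
section Invol2
variable {a b c : ℕ} {T : Fin a → Fin b → Fin (c+1)} {m k : ℕ}

lemma Phi_diag {i : Fin a} {j : Fin b} (h : (j : ℕ) + a = (i : ℕ) + (m+1)) :
    (Phi T m i j : ℕ) = ((Finset.Icc 1 c).filter fun k => (i : ℕ) < Rx T m k).card := by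
  unfold Phi
  rw [if_pos h]

lemma Phi_off {i : Fin a} {j : Fin b} (h : (j : ℕ) + a ≠ (i : ℕ) + (m+1)) :
    Phi T m i j = T i j := by
  unfold Phi
  rw [if_neg h]

lemma Phi_rowM (hr : RowM T) (hcm : ColM T) : RowM (Phi T m) := by
  intro i j j' hjj'
  rw [Fin.le_def]
  refine anti_of_adj (fun j => (Phi T m i j : ℕ)) ?_ j j' hjj'
  intro jv hj
  by_cases h1 : jv + a = (i : ℕ) + (m+1)
  · have h2 : ((⟨jv+1, hj⟩ : Fin b) : ℕ) + a ≠ (i : ℕ) + (m+1) := by simp; omega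
    rw [Phi_off h2, Phi_diag (by simp; omega)]
    rw [entry_eq_card_gg hr hcm i ⟨jv+1, hj⟩ (m := m+2) (by simp; omega)]
    apply Finset.card_le_card
    intro k hk
    simp only [Finset.mem_filter] at hk ⊢
    refine ⟨hk.1, lt_of_lt_of_le hk.2 ?_⟩
    calc gg T (m+2) k ≤ Lf T m k := le_max_right _ _
    _ ≤ Rx T m k := (Rx_bound hcm hk.1).1
  · by_cases h2 : jv + 1 + a = (i : ℕ) + (m+1)
    · rw [Phi_diag (by simp; omega), Phi_off (by simp; omega)]
      rw [entry_eq_card_gg hr hcm i ⟨jv, by omega⟩ (m := m) (by simp; omega)]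
      apply Finset.card_le_card
      intro k hk
      simp only [Finset.mem_filter] at hk ⊢
      refine ⟨hk.1, lt_of_lt_of_le hk.2 ?_⟩
      calc Rx T m k ≤ Uf T m k := (Rx_bound hcm hk.1).2
      _ ≤ gg T m k := min_le_left _ _
    · rw [Phi_off (by simp; omega), Phi_off (by simp; omega)]
      have := hr i ⟨jv, by omega⟩ ⟨jv+1, hj⟩ (by rw [Fin.le_def]; simp)
      rwa [Fin.le_def] at this

lemma Phi_colM (hr : RowM T) (hcm : ColM T) : ColM (Phi T m) := by
  intro i i' j hii'
  rw [Fin.le_def]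
  refine anti_of_adj (fun i => (Phi T m i j : ℕ)) ?_ i i' hii'
  intro iv hi
  by_cases h1 : (j : ℕ) + a = iv + (m+1)
  · have h2 : (j : ℕ) + a ≠ (iv + 1) + (m+1) := by omega
    rw [Phi_off (by simp; omega), Phi_diag (by simp; omega)]
    rw [entry_eq_card_gg hr hcm ⟨iv+1, hi⟩ j (m := m) (by simp; omega)]
    apply Finset.card_le_card
    intro k hk
    simp only [Finset.mem_filter] at hk ⊢
    refine ⟨hk.1, ?_⟩
    have hL : gg T m k - 1 ≤ Lf T m k := le_max_left _ _
    have hR := (Rx_bound (T := T) (m := m) hcm hk.1).1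
    simp at hk
    omega
  · by_cases h2 : (j : ℕ) + a = (iv + 1) + (m+1)
    · rw [Phi_diag (by simp; omega), Phi_off (by simp; omega)]
      rw [entry_eq_card_gg hr hcm ⟨iv, by omega⟩ j (m := m+2) (by simp; omega)]
      apply Finset.card_le_card
      intro k hk
      simp only [Finset.mem_filter] at hk ⊢
      refine ⟨hk.1, ?_⟩
      have hU : Uf T m k ≤ gg T (m+2) k + 1 := min_le_right _ _
      have hR := (Rx_bound (T := T) (m := m) hcm hk.1).2
      simp at hk
      omega
    · rw [Phi_off (by simp; omega), Phi_off (by simp; omega)]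
      have := hcm ⟨iv, by omega⟩ ⟨iv+1, hi⟩ j (by rw [Fin.le_def]; simp)
      rwa [Fin.le_def] at this

lemma gg_Phi_off (hr : RowM T) (hcm : ColM T) {m' : ℕ} (hm' : m' ≠ m + 1) (k : ℕ) :
    gg (Phi T m) m' k = gg T m' k :=
  gg_offdiag_eq (Phi_rowM hr hcm) hr (m+1) (fun i j h => Phi_off h) m' k hm'

lemma Phi_diag_le (hcm : ColM T) (hk : k ∈ Finset.Icc 1 c) (i : Fin a) (j : Fin b)
    (hje : (j : ℕ) + a = (i : ℕ) + (m+1)) :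
    (k ≤ (Phi T m i j : ℕ) ↔ (i : ℕ) < Rx T m k) := by
  rw [Phi_diag hje]
  have hds := downsetIcc_mem_iff ((Finset.Icc 1 c).filter fun k' => (i : ℕ) < Rx T m k')
    (Finset.filter_subset _ _)
    (fun k1 k2 h1 h12 hk2 => by
      simp only [Finset.mem_filter, Finset.mem_Icc] at hk2 ⊢
      refine ⟨⟨h1, by omega⟩, lt_of_lt_of_le hk2.2 ?_⟩
      exact Rx_anti hcm (Finset.mem_Icc.mpr ⟨h1, by omega⟩) (Finset.mem_Icc.mpr hk2.1) h12) k hk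
  rw [← hds]
  simp only [Finset.mem_filter]
  constructor
  · exact fun h => h.2
  · exact fun h => ⟨hk, h⟩

lemma gg_Phi_diag (hr : RowM T) (hcm : ColM T) (hm : m + 2 ≤ a + b)
    (hk : k ∈ Finset.Icc 1 c) : gg (Phi T m) (m+1) k = Rx T m k := by
  rw [F7 (Phi_rowM hr hcm) (m+1) k]
  have hlow := Rx_low (T := T) (m := m) hcm hk
  have hhigh := Rx_high (T := T) (m := m) hcm hm hk
  have hlea := Rx_le_a (T := T) (m := m) hcm hk
  have he : (Finset.univ.filter fun i : Fin a =>
      ∃ j : Fin b, (j : ℕ) + a = (i : ℕ) + (m+1) ∧ k ≤ (Phi T m i j : ℕ)) =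
      (Finset.univ.filter fun i : Fin a => a - (m+1) ≤ (i : ℕ) ∧ (i : ℕ) < Rx T m k) := by
    ext i
    simp only [Finset.mem_filter, Finset.mem_univ, true_and]
    constructor
    · rintro ⟨j, hje, hjv⟩
      rw [Phi_diag_le hcm hk i j hje] at hjv
      omega
    · rintro ⟨hai, hiv⟩
      have hjlt : (i : ℕ) + (m+1) - a < b := by omega
      refine ⟨⟨(i : ℕ) + (m+1) - a, hjlt⟩, by simp; omega, ?_⟩
      rw [Phi_diag_le hcm hk i ⟨(i : ℕ) + (m+1) - a, hjlt⟩ (by simp; omega)]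
      exact hiv
  rw [he, card_filter_Ico_fin (by omega) hlea]
  omega

lemma Rx_Phi (hr : RowM T) (hcm : ColM T) (hm : m + 2 ≤ a + b) (hk : k ∈ Finset.Icc 1 c) :
    Rx (Phi T m) m k = gg T (m+1) k := by
  have hrun : runS (Phi T m) m k = runS T m k := by
    unfold runS
    rw [gg_Phi_off hr hcm (by omega) k, gg_Phi_off hr hcm (by omega) k]
    congr 1
    apply Finset.filter_congr
    intro t _
    rw [gg_Phi_off hr hcm (by omega) t, gg_Phi_off hr hcm (by omega) t]
  have hsig : sig (Phi T m) m k = sig T m k := by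
    rw [sig, sig, min'_congr hrun (runS_ne _ m k) (runS_ne T m k),
      max'_congr hrun (runS_ne _ m k) (runS_ne T m k)]
  have hsmem := sig_spec (T := T) (m := m) hk
  have hLP : Lf (Phi T m) m k = Lf T m k := by
    rw [Lf, Lf, gg_Phi_off hr hcm (by omega) k, gg_Phi_off hr hcm (by omega) k]
  have hUP : Uf (Phi T m) m k = Uf T m k := by
    rw [Uf, Uf, gg_Phi_off hr hcm (by omega) k, gg_Phi_off hr hcm (by omega) k]
  rw [Rx, hsig, hLP, hUP, gg_Phi_diag hr hcm hm hsmem.1]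
  -- now : Lf T m k + Uf T m k - Rx T m (sig T m k) = gg T (m+1) k
  rw [Rx, sig_sig hk, Lf_congr hsmem.2.1 hsmem.2.2, Uf_congr hsmem.2.1 hsmem.2.2]
  have hxb := xbound hcm (T := T) m k
  have hxb2 := xbound hcm (T := T) m (sig T m k)
  rw [Lf_congr hsmem.2.1 hsmem.2.2, Uf_congr hsmem.2.1 hsmem.2.2] at hxb2
  omega

lemma Phi_Phi (hr : RowM T) (hcm : ColM T) (hm : m + 2 ≤ a + b) :
    Phi (Phi T m) m = T := by
  funext i j
  by_cases hd : (j : ℕ) + a = (i : ℕ) + (m+1)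
  · apply Fin.ext
    rw [Phi_diag hd, entry_eq_card_gg hr hcm i j (m := m+1) hd]
    congr 1
    apply Finset.filter_congr
    intro k hk
    rw [Rx_Phi hr hcm hm hk]
  · rw [Phi_off hd, Phi_off hd]

/-- level-statistic indicator -/
def wst (T : Fin a → Fin b → Fin (c+1)) (m k : ℕ) : ℕ :=
  if gg T m k = gg T (m+1) k then 1 else 0

lemma stat_iff (hcm : ColM T) (hk : k ∈ Finset.Icc 1 c) :
    (gg T m k = Rx T m k) ↔
      (gg T (m+1) (sig T m k) = gg T (m+2) (sig T m k)) := by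
  obtain ⟨hs, he1, he2⟩ := sig_spec (T := T) (m := m) hk
  have hxb := xbound hcm (T := T) m (sig T m k)
  rw [Lf_congr he1 he2, Uf_congr he1 he2] at hxb
  have hAB : gg T (m+2) k ≤ gg T m k := gg_anti_m (by omega)
  have h1 := gg_step hcm (T := T) m k
  have h2 : gg T (m+1) k ≤ gg T (m+2) k + 1 := by
    have := gg_step hcm (T := T) (m+1) k
    rwa [show m+1+1 = m+2 by omega] at this
  have h3 : gg T (m+1) k ≤ gg T m k := gg_anti_m (by omega)
  have h4 : gg T (m+2) k ≤ gg T (m+1) k := gg_anti_m (by omega)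
  rw [Lf, Uf] at hxb
  rw [Rx, Lf, Uf, he2]
  omega

lemma stat_sum (hr : RowM T) (hcm : ColM T) (hm : m + 2 ≤ a + b) :
    ∑ k ∈ Finset.Icc 1 c, wst (Phi T m) m k = ∑ k ∈ Finset.Icc 1 c, wst T (m+1) k := by
  have step1 : ∀ k ∈ Finset.Icc 1 c, wst (Phi T m) m k =
      (if gg T (m+1) (sig T m k) = gg T (m+2) (sig T m k) then 1 else 0) := by
    intro k hk
    rw [wst, gg_Phi_off hr hcm (by omega) k, gg_Phi_diag hr hcm hm hk]
    rw [if_congr (stat_iff hcm hk) rfl rfl]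
  rw [Finset.sum_congr rfl step1]
  have step2 : ∀ k ∈ Finset.Icc 1 c, wst T (m+1) k =
      (if gg T (m+1) k = gg T (m+2) k then 1 else 0) := by
    intro k _
    rw [wst, show m+1+1 = m+2 by omega]
  rw [Finset.sum_congr rfl step2]
  apply Finset.sum_nbij' (i := fun k => sig T m k) (j := fun k => sig T m k)
  · intro k hk; exact (sig_spec hk).1
  · intro k hk; exact (sig_spec hk).1
  · intro k hk; exact sig_sig hk
  · intro k hk; exact sig_sig hk
  · intro k hk; rfl

end Invol2
section Glob
variable {a b c : ℕ}

lemma mem_PP_iff {T : Fin a → Fin b → Fin (c+1)} :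
    T ∈ PlanePartitions a b c ↔ RowM T ∧ ColM T := by
  rw [PlanePartitions, Finset.mem_filter]
  constructor
  · exact fun h => h.2
  · exact fun h => ⟨Finset.mem_univ T, h⟩

lemma s_step (m : ℕ) (hm : m + 2 ≤ a + b) :
    ∑ T ∈ PlanePartitions a b c, ∑ k ∈ Finset.Icc 1 c, wst T m k =
    ∑ T ∈ PlanePartitions a b c, ∑ k ∈ Finset.Icc 1 c, wst T (m+1) k := by
  apply Finset.sum_nbij' (i := fun T => Phi T m) (j := fun T => Phi T m)
  · intro T hT
    obtain ⟨hr, hcm⟩ := mem_PP_iff.mp hT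
    exact mem_PP_iff.mpr ⟨Phi_rowM hr hcm, Phi_colM hr hcm⟩
  · intro T hT
    obtain ⟨hr, hcm⟩ := mem_PP_iff.mp hT
    exact mem_PP_iff.mpr ⟨Phi_rowM hr hcm, Phi_colM hr hcm⟩
  · intro T hT
    obtain ⟨hr, hcm⟩ := mem_PP_iff.mp hT
    exact Phi_Phi hr hcm hm
  · intro T hT
    obtain ⟨hr, hcm⟩ := mem_PP_iff.mp hT
    exact Phi_Phi hr hcm hm
  · intro T hT
    obtain ⟨hr, hcm⟩ := mem_PP_iff.mp hT
    have hP : RowM (Phi T m) := Phi_rowM hr hcm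
    have hPc : ColM (Phi T m) := Phi_colM hr hcm
    have := stat_sum (T := Phi T m) (m := m) hP hPc hm
    rwa [Phi_Phi hr hcm hm] at this

lemma s_all (m : ℕ) (hm : m + 1 ≤ a + b) :
    ∑ T ∈ PlanePartitions a b c, ∑ k ∈ Finset.Icc 1 c, wst T m k =
    ∑ T ∈ PlanePartitions a b c, ∑ k ∈ Finset.Icc 1 c, wst T 0 k := by
  induction m with
  | zero => rfl
  | succ n ih =>
      rw [← s_step n (by omega)]
      exact ih (by omega)

lemma telescope_aux (f : ℕ → ℕ) (hstep : ∀ m, f (m+1) ≤ f m ∧ f m ≤ f (m+1) + 1) :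
    ∀ n, (∑ m ∈ Finset.range n, if f m = f (m+1) then 1 else 0) = n + f n - f 0 := by
  have haux : ∀ n, f 0 ≤ f n + n := by
    intro n
    induction n with
    | zero => simp
    | succ p ih => have := (hstep p).2; omega
  intro n
  induction n with
  | zero => simp
  | succ p ih =>
      rw [Finset.sum_range_succ, ih]
      have h1 := hstep p
      have h2 := haux p
      have h3 := haux (p+1)
      split_ifs with h
      · omega
      · omega

lemma sum_wst_levels {T : Fin a → Fin b → Fin (c+1)} (hcm : ColM T) (k : ℕ) :
    ∑ m ∈ Finset.range (a+b), wst T m k = b := by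
  have := telescope_aux (fun m => gg T m k)
    (fun m => ⟨gg_anti_m (by omega), gg_step hcm m k⟩) (a+b)
  simp only [wst]
  rw [this, gg_top, gg_zero]
  omega

lemma corner_eq {T : Fin a → Fin b → Fin (c+1)} (hr : RowM T) (hcm : ColM T)
    (ha : 0 < a) (hb : 0 < b) :
    (T ⟨a-1, by omega⟩ ⟨0, hb⟩ : ℕ) = ∑ k ∈ Finset.Icc 1 c, wst T 0 k := by
  rw [entry_eq_card_gg hr hcm ⟨a-1, by omega⟩ ⟨0, hb⟩ (m := 1) (by simp; omega)]
  rw [Finset.card_filter]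
  apply Finset.sum_congr rfl
  intro k _
  rw [wst, gg_zero]
  have h1 : gg T 1 k ≤ a := gg_le
  have : ((⟨a-1, by omega⟩ : Fin a) : ℕ) = a - 1 := rfl
  rw [this]
  have : (0:ℕ)+1 = 1 := rfl
  rw [this]
  split_ifs with h2 h3 h3
  · rfl
  · omega
  · omega
  · rfl

lemma key_count (ha : 0 < a) (hb : 0 < b) :
    (a + b) * ∑ T ∈ PlanePartitions a b c, (T ⟨a-1, by omega⟩ ⟨0, hb⟩ : ℕ) =
      b * c * (PlanePartitions a b c).card := by
  have h1 : ∑ T ∈ PlanePartitions a b c, (T ⟨a-1, by omega⟩ ⟨0, hb⟩ : ℕ) =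
      ∑ T ∈ PlanePartitions a b c, ∑ k ∈ Finset.Icc 1 c, wst T 0 k := by
    apply Finset.sum_congr rfl
    intro T hT
    obtain ⟨hr, hcm⟩ := mem_PP_iff.mp hT
    exact corner_eq hr hcm ha hb
  rw [h1]
  have h2 : ∑ m ∈ Finset.range (a+b),
      (∑ T ∈ PlanePartitions a b c, ∑ k ∈ Finset.Icc 1 c, wst T m k) =
      (a+b) * ∑ T ∈ PlanePartitions a b c, ∑ k ∈ Finset.Icc 1 c, wst T 0 k := by
    have e1 : ∀ m ∈ Finset.range (a+b),
        (∑ T ∈ PlanePartitions a b c, ∑ k ∈ Finset.Icc 1 c, wst T m k) =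
        ∑ T ∈ PlanePartitions a b c, ∑ k ∈ Finset.Icc 1 c, wst T 0 k := by
      intro m hm
      rw [Finset.mem_range] at hm
      exact s_all m hm
    rw [Finset.sum_congr rfl e1]
    rw [Finset.sum_const, Finset.card_range, smul_eq_mul]
  rw [← h2, Finset.sum_comm]
  have h3 : ∀ T ∈ PlanePartitions a b c,
      ∑ m ∈ Finset.range (a+b), ∑ k ∈ Finset.Icc 1 c, wst T m k = b * c := by
    intro T hT
    obtain ⟨hr, hcm⟩ := mem_PP_iff.mp hT
    rw [Finset.sum_comm]
    have e2 : ∀ k ∈ Finset.Icc 1 c, ∑ m ∈ Finset.range (a+b), wst T m k = b :=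
      fun k _ => sum_wst_levels hcm k
    rw [Finset.sum_congr rfl e2]
    rw [Finset.sum_const, Nat.card_Icc, smul_eq_mul]
    rw [Nat.add_sub_cancel, Nat.mul_comm]
  rw [Finset.sum_congr rfl h3, Finset.sum_const, smul_eq_mul]
  ring

lemma PP_nonempty : 0 < (PlanePartitions a b c).card := by
  rw [Finset.card_pos]
  refine ⟨fun _ _ => 0, mem_PP_iff.mpr ⟨?_, ?_⟩⟩
  · intro i j j' h; exact le_refl _
  · intro i i' j h; exact le_refl _

end Glob


theorem expected_bottom_left_corner (a b c : ℕ) (ha : 0 < a) (hb : 0 < b) (hc : 0 < c) :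
    E a b c a 1 = (b : ℚ) * c / ((a : ℚ) + b) := by
  have hcond : 1 ≤ a ∧ a ≤ a ∧ 1 ≤ 1 ∧ 1 ≤ b := ⟨ha, le_refl a, le_refl 1, hb⟩
  have hentry : ∀ T : Fin a → Fin b → Fin (c+1), entry a b c T a 1 =
      (T ⟨a-1, by omega⟩ ⟨0, hb⟩ : ℕ) := by
    intro T
    rw [entry, dif_pos hcond]
  set N := (PlanePartitions a b c).card with hN
  have hNpos : 0 < N := PP_nonempty
  set S := ∑ T ∈ PlanePartitions a b c, (T ⟨a-1, by omega⟩ ⟨0, hb⟩ : ℕ) with hS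
  have hkey := key_count (c := c) ha hb
  rw [← hS, ← hN] at hkey
  have hsum : ∑ T ∈ PlanePartitions a b c, ((entry a b c T a 1 : ℚ)) = (S : ℚ) := by
    rw [hS]
    push_cast
    apply Finset.sum_congr rfl
    intro T _
    rw [hentry T]
  rw [E, hsum]
  have hab : ((a : ℚ) + b) ≠ 0 := by positivity
  have hNq : ((N : ℚ)) ≠ 0 := by positivity
  rw [div_eq_div_iff hNq hab]
  have : ((a + b) * S : ℕ) = ((b * c * N : ℕ)) := hkey
  have hq : ((a : ℚ) + b) * S = (b : ℚ) * c * N := by exact_mod_cast this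
  linarith [hq]
end

section
/- Let a, b, c be positive integers. The expected value of the top-right corner entry T(1,b) of a uniformly random plane partition T in an a×b×c box equals a·c/(a+b); equivalently, (a+b) · Σ_T T(1,b) = a·c · N(a,b,c), the sum being over all plane partitions T in the a×b×c box. -/
open Finset

namespace PPaux

variable (a b c : ℕ)

/-- lower reflection bound at 1-based cell (i,j) -/
def lo (T : Fin a → Fin b → Fin (c+1)) (i j : ℕ) : ℕ :=
  max (entry a b c T i (j+1)) (entry a b c T (i+1) j)

/-- upper reflection bound at 1-based cell (i,j) -/
def hi (T : Fin a → Fin b → Fin (c+1)) (i j : ℕ) : ℕ :=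
  min (if 2 ≤ j then entry a b c T i (j-1) else c)
      (if 2 ≤ i then entry a b c T (i-1) j else c)

/-- toggle of the `v`-th file -/
def iota (v : ℕ) (T : Fin a → Fin b → Fin (c+1)) : Fin a → Fin b → Fin (c+1) :=
  fun i j => if b + (i : ℕ) = v + (j : ℕ) then
    ⟨min (lo a b c T ((i:ℕ)+1) ((j:ℕ)+1) + hi a b c T ((i:ℕ)+1) ((j:ℕ)+1) - (T i j : ℕ)) c,
      Nat.lt_succ_of_le (min_le_right _ _)⟩
  else T i j

def g (T : Fin a → Fin b → Fin (c+1)) (v i : ℕ) : ℕ :=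
  if v < i then 0 else if b + i ≤ v then c else entry a b c T i (b + i - v)

def Gn (T : Fin a → Fin b → Fin (c+1)) (v : ℕ) : ℕ :=
  ∑ i ∈ range a, g a b c T v (i+1)

def Abar (T : Fin a → Fin b → Fin (c+1)) (v i : ℕ) : ℕ :=
  if i = 0 then c else g a b c T (v-1) i

variable {a b c}

lemma entry_le (T : Fin a → Fin b → Fin (c+1)) (i j : ℕ) : entry a b c T i j ≤ c := by
  unfold entry
  split
  · exact Fin.is_le _
  · exact Nat.zero_le _

lemma entry_out (T : Fin a → Fin b → Fin (c+1)) {i j : ℕ}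
    (h : ¬(1 ≤ i ∧ i ≤ a ∧ 1 ≤ j ∧ j ≤ b)) : entry a b c T i j = 0 := dif_neg h

lemma entry_in (T : Fin a → Fin b → Fin (c+1)) {i j : ℕ}
    (h1 : 1 ≤ i) (h2 : i ≤ a) (h3 : 1 ≤ j) (h4 : j ≤ b) :
    entry a b c T i j = (T ⟨i - 1, by omega⟩ ⟨j - 1, by omega⟩ : ℕ) :=
  dif_pos ⟨h1, h2, h3, h4⟩

lemma entry_coe (T : Fin a → Fin b → Fin (c+1)) (i : Fin a) (j : Fin b) :
    entry a b c T ((i:ℕ)+1) ((j:ℕ)+1) = (T i j : ℕ) := by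
  rw [entry_in T (by omega) (by omega) (by omega) (by omega)]
  congr <;> omega

lemma mem_PP {T : Fin a → Fin b → Fin (c+1)} :
    T ∈ PlanePartitions a b c ↔
      (∀ i : Fin a, ∀ j j' : Fin b, j ≤ j' → T i j' ≤ T i j) ∧
      (∀ i i' : Fin a, ∀ j : Fin b, i ≤ i' → T i' j ≤ T i j) := by
  simp [PlanePartitions]

lemma entry_anti_row {T : Fin a → Fin b → Fin (c+1)} (hT : T ∈ PlanePartitions a b c)
    {i j j' : ℕ} (h1 : 1 ≤ j) (h2 : j ≤ j') :
    entry a b c T i j' ≤ entry a b c T i j := by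
  by_cases h : 1 ≤ i ∧ i ≤ a ∧ 1 ≤ j' ∧ j' ≤ b
  · obtain ⟨hi1, hi2, hj1, hj2⟩ := h
    rw [entry_in T hi1 hi2 hj1 hj2, entry_in T hi1 hi2 h1 (le_trans h2 hj2)]
    exact (mem_PP.1 hT).1 _ ⟨j-1, by omega⟩ ⟨j'-1, by omega⟩ (by simp [Fin.le_def]; omega)
  · rw [entry_out T h]; exact Nat.zero_le _

lemma entry_anti_col {T : Fin a → Fin b → Fin (c+1)} (hT : T ∈ PlanePartitions a b c)
    {i i' j : ℕ} (h1 : 1 ≤ i) (h2 : i ≤ i') :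
    entry a b c T i' j ≤ entry a b c T i j := by
  by_cases h : 1 ≤ i' ∧ i' ≤ a ∧ 1 ≤ j ∧ j ≤ b
  · obtain ⟨hi1, hi2, hj1, hj2⟩ := h
    rw [entry_in T hi1 hi2 hj1 hj2, entry_in T h1 (le_trans h2 hi2) hj1 hj2]
    exact (mem_PP.1 hT).2 ⟨i-1, by omega⟩ ⟨i'-1, by omega⟩ _ (by simp [Fin.le_def]; omega)
  · rw [entry_out T h]; exact Nat.zero_le _

lemma lo_le {T : Fin a → Fin b → Fin (c+1)} (hT : T ∈ PlanePartitions a b c)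
    {i j : ℕ} (h1 : 1 ≤ i) (h3 : 1 ≤ j) :
    lo a b c T i j ≤ entry a b c T i j := by
  unfold lo
  exact max_le (entry_anti_row hT h3 (by omega)) (entry_anti_col hT h1 (by omega))

lemma le_hi {T : Fin a → Fin b → Fin (c+1)} (hT : T ∈ PlanePartitions a b c)
    (i j : ℕ) : entry a b c T i j ≤ hi a b c T i j := by
  unfold hi
  refine le_min ?_ ?_
  · split
    · exact entry_anti_row hT (by omega) (by omega)
    · exact entry_le T i j
  · split
    · exact entry_anti_col hT (by omega) (by omega)
    · exact entry_le T i j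

lemma hi_le (T : Fin a → Fin b → Fin (c+1)) (i j : ℕ) : hi a b c T i j ≤ c := by
  unfold hi
  refine le_trans (min_le_right _ _) ?_
  split
  · exact entry_le T _ _
  · exact le_refl c

end PPaux

namespace PPaux

variable {a b c : ℕ}

lemma entry_iota_off (v : ℕ) (T : Fin a → Fin b → Fin (c+1)) {i j : ℕ}
    (h : ¬ (b + i = v + j)) :
    entry a b c (iota a b c v T) i j = entry a b c T i j := by
  by_cases hin : 1 ≤ i ∧ i ≤ a ∧ 1 ≤ j ∧ j ≤ b
  · obtain ⟨h1, h2, h3, h4⟩ := hin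
    rw [entry_in _ h1 h2 h3 h4, entry_in T h1 h2 h3 h4]
    unfold iota
    rw [if_neg (by simp only []; omega)]
  · rw [entry_out _ hin, entry_out T hin]

lemma entry_iota_on {v : ℕ} {T : Fin a → Fin b → Fin (c+1)} (hT : T ∈ PlanePartitions a b c)
    {i j : ℕ} (h1 : 1 ≤ i) (h2 : i ≤ a) (h3 : 1 ≤ j) (h4 : j ≤ b)
    (h : b + i = v + j) :
    entry a b c (iota a b c v T) i j
      = lo a b c T i j + hi a b c T i j - entry a b c T i j := by
  rw [entry_in _ h1 h2 h3 h4]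
  unfold iota
  rw [if_pos (by simp only []; omega)]
  simp only []
  have hx : (T ⟨i-1, by omega⟩ ⟨j-1, by omega⟩ : ℕ) = entry a b c T i j :=
    (entry_in T h1 h2 h3 h4).symm
  have harg1 : (((⟨i-1, by omega⟩ : Fin a) : ℕ)) + 1 = i := by simp; omega
  have harg2 : (((⟨j-1, by omega⟩ : Fin b) : ℕ)) + 1 = j := by simp; omega
  rw [harg1, harg2, hx]
  have hlo := lo_le hT h1 h3
  have hhi := le_hi hT i j
  have hhc := hi_le T i j
  exact Nat.min_eq_left (by omega)

end PPaux

namespace PPaux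

variable {a b c : ℕ}

lemma row_of_adj {T : Fin a → Fin b → Fin (c+1)}
    (h : ∀ (i : Fin a) (j j' : Fin b), (j' : ℕ) = (j : ℕ) + 1 → T i j' ≤ T i j) :
    ∀ (i : Fin a) (j j' : Fin b), j ≤ j' → T i j' ≤ T i j := by
  intro i j j' hle
  obtain ⟨n, hn⟩ : ∃ n, (j' : ℕ) = (j : ℕ) + n := ⟨(j' : ℕ) - (j : ℕ), by
    have := (Fin.le_def).1 hle; omega⟩
  clear hle
  induction n generalizing j' with
  | zero => have : j' = j := Fin.ext (by omega); rw [this]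
  | succ n ih =>
      have hb' : (j : ℕ) + n < b := by have := j'.isLt; omega
      have step := h i ⟨(j:ℕ)+n, hb'⟩ j' (by simp only [Fin.val_mk]; omega)
      exact le_trans step (ih ⟨(j:ℕ)+n, hb'⟩ (by simp))

lemma col_of_adj {T : Fin a → Fin b → Fin (c+1)}
    (h : ∀ (i i' : Fin a) (j : Fin b), (i' : ℕ) = (i : ℕ) + 1 → T i' j ≤ T i j) :
    ∀ (i i' : Fin a) (j : Fin b), i ≤ i' → T i' j ≤ T i j := by
  intro i i' j hle
  obtain ⟨n, hn⟩ : ∃ n, (i' : ℕ) = (i : ℕ) + n := ⟨(i' : ℕ) - (i : ℕ), by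
    have := (Fin.le_def).1 hle; omega⟩
  clear hle
  induction n generalizing i' with
  | zero => have : i' = i := Fin.ext (by omega); rw [this]
  | succ n ih =>
      have hb' : (i : ℕ) + n < a := by have := i'.isLt; omega
      have step := h ⟨(i:ℕ)+n, hb'⟩ i' j (by simp only [Fin.val_mk]; omega)
      exact le_trans step (ih ⟨(i:ℕ)+n, hb'⟩ (by simp))

lemma iota_mem {v : ℕ} {T : Fin a → Fin b → Fin (c+1)} (hT : T ∈ PlanePartitions a b c) :
    iota a b c v T ∈ PlanePartitions a b c := by
  set T' := iota a b c v T with hT'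
  have key : ∀ (I J : ℕ), 1 ≤ I → I ≤ a → 1 ≤ J → J + 1 ≤ b →
      entry a b c T' I (J+1) ≤ entry a b c T' I J := by
    intro I J hI1 hI2 hJ1 hJ2
    by_cases h1 : b + I = v + J
    · -- (I,J) on file, (I,J+1) off
      rw [entry_iota_on hT hI1 hI2 hJ1 (by omega) h1, entry_iota_off v T (by omega)]
      have : entry a b c T I (J+1) ≤ lo a b c T I J := le_max_left _ _
      have hx := le_hi hT I J
      omega
    · by_cases h2 : b + I = v + (J+1)
      · rw [entry_iota_off v T h1, entry_iota_on hT hI1 hI2 (by omega) hJ2 h2]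
        have hup : hi a b c T I (J+1) ≤ entry a b c T I J := by
          refine le_trans (min_le_left _ _) ?_
          rw [if_pos (by omega)]
          simp only [Nat.add_sub_cancel]
          exact le_refl _
        have hx := lo_le hT hI1 (show 1 ≤ J+1 by omega)
        omega
      · rw [entry_iota_off v T h1, entry_iota_off v T h2]
        exact entry_anti_row hT hJ1 (by omega)
  have keyc : ∀ (I J : ℕ), 1 ≤ I → I + 1 ≤ a → 1 ≤ J → J ≤ b →
      entry a b c T' (I+1) J ≤ entry a b c T' I J := by
    intro I J hI1 hI2 hJ1 hJ2
    by_cases h1 : b + I = v + J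
    · rw [entry_iota_on hT hI1 (by omega) hJ1 hJ2 h1, entry_iota_off v T (by omega)]
      have : entry a b c T (I+1) J ≤ lo a b c T I J := le_max_right _ _
      have hx := le_hi hT I J
      omega
    · by_cases h2 : b + (I+1) = v + J
      · rw [entry_iota_off v T h1, entry_iota_on hT (by omega) hI2 hJ1 hJ2 h2]
        have hup : hi a b c T (I+1) J ≤ entry a b c T I J := by
          refine le_trans (min_le_right _ _) ?_
          rw [if_pos (by omega)]
          simp only [Nat.add_sub_cancel]
          exact le_refl _
        have hx := lo_le hT (show 1 ≤ I+1 by omega) hJ1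
        omega
      · rw [entry_iota_off v T h1, entry_iota_off v T h2]
        exact entry_anti_col hT hI1 (by omega)
  rw [mem_PP]
  constructor
  · apply row_of_adj
    intro i j j' hadj
    rw [Fin.le_def, ← entry_coe T' i j, ← entry_coe T' i j']
    rw [hadj]
    exact key ((i:ℕ)+1) ((j:ℕ)+1) (by omega) (by omega) (by omega) (by
      have := j'.isLt; omega)
  · apply col_of_adj
    intro i i' j hadj
    rw [Fin.le_def, ← entry_coe T' i j, ← entry_coe T' i' j]
    rw [hadj]
    exact keyc ((i:ℕ)+1) ((j:ℕ)+1) (by omega) (by have := i'.isLt; omega) (by omega)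
      (by omega)

lemma iota_iota {v : ℕ} {T : Fin a → Fin b → Fin (c+1)} (hT : T ∈ PlanePartitions a b c) :
    iota a b c v (iota a b c v T) = T := by
  set T' := iota a b c v T with hT'
  funext i j
  by_cases h : b + (i : ℕ) = v + (j : ℕ)
  · have hIJ : b + ((i:ℕ)+1) = v + ((j:ℕ)+1) := by omega
    apply Fin.ext
    show (iota a b c v T' i j : ℕ) = (T i j : ℕ)
    unfold iota
    rw [if_pos h]
    simp only []
    have hlo : lo a b c T' ((i:ℕ)+1) ((j:ℕ)+1) = lo a b c T ((i:ℕ)+1) ((j:ℕ)+1) := by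
      unfold lo
      rw [entry_iota_off v T (by omega), entry_iota_off v T (by omega)]
    have hhi : hi a b c T' ((i:ℕ)+1) ((j:ℕ)+1) = hi a b c T ((i:ℕ)+1) ((j:ℕ)+1) := by
      unfold hi
      congr 1 <;> [skip; skip] <;> split <;>
        first
          | rw [entry_iota_off v T (by omega)]
          | rfl
    have hx' : (T' i j : ℕ)
        = lo a b c T ((i:ℕ)+1) ((j:ℕ)+1) + hi a b c T ((i:ℕ)+1) ((j:ℕ)+1)
          - entry a b c T ((i:ℕ)+1) ((j:ℕ)+1) := by
      rw [← entry_coe T' i j]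
      exact entry_iota_on hT (by omega) (by omega) (by omega) (by omega) hIJ
    rw [hlo, hhi, hx']
    have h1 := lo_le hT (i := (i:ℕ)+1) (j := (j:ℕ)+1) (by omega) (by omega)
    have h2 := le_hi hT ((i:ℕ)+1) ((j:ℕ)+1)
    have h3 := hi_le T ((i:ℕ)+1) ((j:ℕ)+1)
    rw [← entry_coe T i j]
    omega
  · show iota a b c v T' i j = T i j
    unfold iota
    rw [if_neg h]
    show iota a b c v T i j = T i j
    unfold iota
    rw [if_neg h]

end PPaux

namespace PPaux

variable {a b c : ℕ}

lemma g_zero' (T : Fin a → Fin b → Fin (c+1)) {v i : ℕ} (h : v < i) :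
    g a b c T v i = 0 := by unfold g; rw [if_pos h]

lemma g_c (T : Fin a → Fin b → Fin (c+1)) {v i : ℕ} (h1 : ¬ v < i) (h2 : b + i ≤ v) :
    g a b c T v i = c := by unfold g; rw [if_neg h1, if_pos h2]

lemma g_entry (T : Fin a → Fin b → Fin (c+1)) {v i : ℕ} (h1 : ¬ v < i) (h2 : ¬ b + i ≤ v) :
    g a b c T v i = entry a b c T i (b + i - v) := by unfold g; rw [if_neg h1, if_neg h2]

lemma g_le (T : Fin a → Fin b → Fin (c+1)) (v i : ℕ) : g a b c T v i ≤ c := by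
  unfold g; split
  · exact Nat.zero_le _
  · split
    · exact le_refl _
    · exact entry_le T _ _

lemma g_row_out (T : Fin a → Fin b → Fin (c+1)) {w i : ℕ} (hi : a < i) (hw : w < b + i) :
    g a b c T w i = 0 := by
  by_cases h : w < i
  · exact g_zero' T h
  · rw [g_entry T h (by omega)]
    exact entry_out T (by omega)

lemma pointwise {v i : ℕ} {T : Fin a → Fin b → Fin (c+1)} (hT : T ∈ PlanePartitions a b c)
    (hb : 1 ≤ b) (hv1 : 1 ≤ v) (h1i : 1 ≤ i) (hia : i ≤ a) :
    g a b c (iota a b c v T) v i + g a b c T v i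
      = max (Abar a b c T v i) (g a b c T (v+1) (i+1))
        + min (g a b c T (v+1) i) (Abar a b c T v (i-1)) := by
  by_cases hc1 : v < i
  · -- case 1 : cell above the staircase, everything 0
    rw [g_zero' _ hc1, g_zero' T hc1]
    have r1 : Abar a b c T v i = 0 := by
      unfold Abar; rw [if_neg (by omega)]; exact g_zero' T (by omega)
    have r2 : g a b c T (v+1) (i+1) = 0 := g_zero' T (by omega)
    rw [r1, r2]
    by_cases hvi : v + 1 < i
    · rw [g_zero' T hvi]; simp
    · have r4 : Abar a b c T v (i-1) = 0 := by
        unfold Abar; rw [if_neg (by omega)]; exact g_zero' T (by omega)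
      rw [r4]; simp
  · by_cases hc2 : b + i ≤ v
    · -- case 2 : everything c
      rw [g_c _ hc1 hc2, g_c T hc1 hc2]
      have r2 : g a b c T (v+1) (i+1) = c := g_c T (by omega) (by omega)
      have r3 : g a b c T (v+1) i = c := g_c T (by omega) (by omega)
      have r4 : Abar a b c T v (i-1) = c := by
        by_cases hI : i = 1
        · unfold Abar; rw [hI]; simp
        · unfold Abar; rw [if_neg (by omega)]; exact g_c T (by omega) (by omega)
      have r1 : Abar a b c T v i ≤ c := by
        unfold Abar; split
        · exact le_refl _
        · exact g_le T _ _
      rw [r2, r3, r4, max_eq_right r1, min_self]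
    · -- case 3 : the genuine reflection case
      set j := b + i - v with hj
      have hj1 : 1 ≤ j := by omega
      have hj2 : j ≤ b := by omega
      have hfile : b + i = v + j := by omega
      have h3a : Abar a b c T v i = entry a b c T i (j+1) := by
        unfold Abar; rw [if_neg (by omega)]
        by_cases hvi : v = i
        · rw [g_zero' T (by omega), entry_out T (by omega)]
        · rw [g_entry T (by omega) (by omega)]
          congr 1 <;> omega
      have h3b : g a b c T (v+1) (i+1) = entry a b c T (i+1) j := by
        rw [g_entry T (by omega) (by omega)]
        congr 1 <;> omega
      have h3c : g a b c T (v+1) i = (if 2 ≤ j then entry a b c T i (j-1) else c) := by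
        by_cases hj' : j = 1
        · rw [g_c T (by omega) (by omega), if_neg (by omega)]
        · rw [g_entry T (by omega) (by omega), if_pos (by omega)]
          congr 1 <;> omega
      have h3d : Abar a b c T v (i-1) = (if 2 ≤ i then entry a b c T (i-1) j else c) := by
        by_cases hI : i = 1
        · unfold Abar; rw [hI, if_pos rfl, if_neg (by omega)]
        · unfold Abar; rw [if_neg (by omega), if_pos (by omega),
            g_entry T (by omega) (by omega)]
          congr 1 <;> omega
      have hlhs1 : g a b c (iota a b c v T) v i
          = lo a b c T i j + hi a b c T i j - entry a b c T i j := by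
        rw [g_entry _ hc1 hc2, ← hj]
        exact entry_iota_on hT h1i hia hj1 hj2 hfile
      have hlhs2 : g a b c T v i = entry a b c T i j := by
        rw [g_entry T hc1 hc2]
      rw [hlhs1, hlhs2, h3a, h3b, h3c, h3d]
      have hle1 := lo_le hT h1i hj1 (T := T) (j := j)
      have hle2 := le_hi hT i j (T := T)
      show _ = lo a b c T i j + hi a b c T i j
      omega

end PPaux

namespace PPaux

variable {a b c : ℕ}

lemma step {v : ℕ} {T : Fin a → Fin b → Fin (c+1)} (hT : T ∈ PlanePartitions a b c)
    (ha : 1 ≤ a) (hb : 1 ≤ b) (hv1 : 1 ≤ v) (hv2 : v + 1 ≤ a + b) :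
    Gn a b c (iota a b c v T) v + Gn a b c T v
      = Gn a b c T (v-1) + Gn a b c T (v+1) := by
  obtain ⟨a', rfl⟩ : ∃ a', a = a' + 1 := ⟨a - 1, by omega⟩
  set A : ℕ → ℕ := fun i => Abar (a'+1) b c T v i with hA
  set B : ℕ → ℕ := fun i => g (a'+1) b c T (v+1) i with hB
  set M : ℕ → ℕ := fun i => max (A i) (B (i+1)) with hM
  have e1 : Gn (a'+1) b c (iota (a'+1) b c v T) v + Gn (a'+1) b c T v
      = ∑ i ∈ range (a'+1), (M (i+1) + min (B (i+1)) (A i)) := by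
    unfold Gn
    rw [← Finset.sum_add_distrib]
    refine Finset.sum_congr rfl ?_
    intro i hi
    have hi' : i + 1 ≤ a' + 1 := by
      have := Finset.mem_range.1 hi; omega
    have hp := pointwise hT hb hv1 (Nat.le_add_left 1 i) hi'
    rw [hp, hM, hA, hB]
    simp only [Nat.add_sub_cancel]
  have e3 : (∑ i ∈ range (a'+1), (M (i+1) + min (B (i+1)) (A i)))
        + ∑ i ∈ range (a'+1), M i
      = (∑ i ∈ range (a'+1), M (i+1)) + ∑ i ∈ range (a'+1), (A i + B (i+1)) := by
    rw [← Finset.sum_add_distrib, ← Finset.sum_add_distrib]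
    refine Finset.sum_congr rfl ?_
    intro i _
    have h1 : min (B (i+1)) (A i) + max (B (i+1)) (A i) = B (i+1) + A i :=
      min_add_max _ _
    have h2 : M i = max (B (i+1)) (A i) := by rw [hM]; exact max_comm _ _
    omega
  have e4 : (∑ i ∈ range (a'+1), M (i+1)) + M 0
      = (∑ i ∈ range (a'+1), M i) + M (a'+1) := by
    rw [← Finset.sum_range_succ' M (a'+1), Finset.sum_range_succ M (a'+1)]
  have hM0 : M 0 = c := by
    have hA0 : A 0 = c := by simp [hA, Abar]
    show max (A 0) (B (0+1)) = c
    rw [hA0]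
    exact max_eq_left (g_le T _ _)
  have hMa : M (a'+1) = g (a'+1) b c T (v-1) (a'+1) := by
    have hB0 : B (a'+1+1) = 0 := g_row_out T (by omega) (by omega)
    have hAa : A (a'+1) = g (a'+1) b c T (v-1) (a'+1) := by simp [hA, Abar]
    show max (A (a'+1)) (B (a'+1+1)) = g (a'+1) b c T (v-1) (a'+1)
    rw [hB0, hAa]
    exact max_eq_left (Nat.zero_le _)
  have e5 : ∑ i ∈ range (a'+1), A i
      = (∑ i ∈ range a', g (a'+1) b c T (v-1) (i+1)) + c := by
    rw [Finset.sum_range_succ' A a']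
    have h1 : ∀ i ∈ range a', A (i+1) = g (a'+1) b c T (v-1) (i+1) := by
      intro i _; simp [hA, Abar]
    have h2 : A 0 = c := by simp [hA, Abar]
    rw [Finset.sum_congr rfl h1, h2]
  have e6 : Gn (a'+1) b c T (v-1)
      = (∑ i ∈ range a', g (a'+1) b c T (v-1) (i+1)) + g (a'+1) b c T (v-1) (a'+1) := by
    unfold Gn
    rw [Finset.sum_range_succ]
  have e7 : Gn (a'+1) b c T (v+1) = ∑ i ∈ range (a'+1), B (i+1) := by
    unfold Gn
    rfl
  have e8 : ∑ i ∈ range (a'+1), (A i + B (i+1))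
      = (∑ i ∈ range (a'+1), A i) + ∑ i ∈ range (a'+1), B (i+1) :=
    Finset.sum_add_distrib
  omega

end PPaux

namespace PPaux

variable {a b c : ℕ}

lemma Gn_zero (T : Fin a → Fin b → Fin (c+1)) : Gn a b c T 0 = 0 := by
  unfold Gn
  refine Finset.sum_eq_zero ?_
  intro i _
  exact g_zero' T (by omega)

lemma Gn_top (T : Fin a → Fin b → Fin (c+1)) : Gn a b c T (a+b) = a * c := by
  unfold Gn
  rw [Finset.sum_congr rfl (g := fun _ => c) ?_]
  · rw [Finset.sum_const, Finset.card_range, smul_eq_mul]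
  · intro i hi
    have hi' : i < a := Finset.mem_range.1 hi
    exact g_c T (by omega) (by omega)

lemma Gn_one (T : Fin a → Fin b → Fin (c+1)) (ha : 1 ≤ a) (hb : 1 ≤ b) :
    Gn a b c T 1 = entry a b c T 1 b := by
  unfold Gn
  rw [Finset.sum_eq_single_of_mem 0 (Finset.mem_range.2 (by omega))]
  · have h1 : ¬ (1 : ℕ) < 0 + 1 := by omega
    rw [g_entry T h1 (by omega)]
    congr 1 <;> omega
  · intro i _ hne
    exact g_zero' T (by omega)

lemma zero_mem : (fun (_ : Fin a) (_ : Fin b) => (0 : Fin (c+1))) ∈ PlanePartitions a b c := by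
  rw [mem_PP]
  exact ⟨fun _ _ _ _ => le_refl _, fun _ _ _ _ => le_refl _⟩

end PPaux

theorem expected_top_right_corner (a b c : ℕ) (ha : 0 < a) (hb : 0 < b) (hc : 0 < c) :
    E a b c 1 b = (a : ℚ) * c / ((a : ℚ) + b) := by
  classical
  set N := PlanePartitions a b c with hN
  set p : ℕ → ℚ := fun v => ∑ T ∈ N, (PPaux.Gn a b c T v : ℚ) with hp
  have hinv : ∀ v : ℕ, (∑ T ∈ N, (PPaux.Gn a b c (PPaux.iota a b c v T) v : ℚ)) = p v := by
    intro v
    refine Finset.sum_nbij' (PPaux.iota a b c v) (PPaux.iota a b c v) ?_ ?_ ?_ ?_ ?_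
    · intro T hT; exact PPaux.iota_mem hT
    · intro T hT; exact PPaux.iota_mem hT
    · intro T hT; exact PPaux.iota_iota hT
    · intro T hT; exact PPaux.iota_iota hT
    · intro T hT; rfl
  have hrec : ∀ v : ℕ, 1 ≤ v → v + 1 ≤ a + b → p (v-1) + p (v+1) = p v + p v := by
    intro v hv1 hv2
    have : ∀ T ∈ N, ((PPaux.Gn a b c T (v-1) : ℚ) + PPaux.Gn a b c T (v+1))
        = (PPaux.Gn a b c (PPaux.iota a b c v T) v : ℚ) + PPaux.Gn a b c T v := by
      intro T hT
      have h := PPaux.step hT (by omega) (by omega) hv1 hv2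
      have h2 : PPaux.Gn a b c T (v-1) + PPaux.Gn a b c T (v+1)
          = PPaux.Gn a b c (PPaux.iota a b c v T) v + PPaux.Gn a b c T v := by omega
      exact_mod_cast h2
    calc p (v-1) + p (v+1)
        = ∑ T ∈ N, ((PPaux.Gn a b c T (v-1) : ℚ) + PPaux.Gn a b c T (v+1)) := by
          rw [hp]; rw [← Finset.sum_add_distrib]
      _ = ∑ T ∈ N, ((PPaux.Gn a b c (PPaux.iota a b c v T) v : ℚ) + PPaux.Gn a b c T v) :=
          Finset.sum_congr rfl this
      _ = (∑ T ∈ N, (PPaux.Gn a b c (PPaux.iota a b c v T) v : ℚ))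
            + ∑ T ∈ N, (PPaux.Gn a b c T v : ℚ) := Finset.sum_add_distrib
      _ = p v + p v := by rw [hinv v, hp]
  have hp0 : p 0 = 0 := by
    rw [hp]
    refine Finset.sum_eq_zero ?_
    intro T _
    rw [PPaux.Gn_zero T]
    norm_num
  have hlin : ∀ v : ℕ, v ≤ a + b → p v = (v : ℚ) * p 1 := by
    intro v
    induction v using Nat.strong_induction_on with
    | _ v ih =>
      match v with
      | 0 => intro _; rw [hp0]; norm_num
      | 1 => intro _; norm_num
      | (w+2) =>
        intro hw
        have h1 := hrec (w+1) (by omega) (by omega)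
        have h2 := ih w (by omega) (by omega)
        have h3 := ih (w+1) (by omega) (by omega)
        have : (w+1:ℕ) - 1 = w := by omega
        rw [this] at h1
        rw [h2, h3] at h1
        push_cast at h1 ⊢
        linarith
  have htop : p (a+b) = (N.card : ℚ) * ((a : ℚ) * c) := by
    have hterm : ∀ T ∈ N, (PPaux.Gn a b c T (a+b) : ℚ) = (a : ℚ) * c := by
      intro T _
      rw [PPaux.Gn_top T]
      push_cast
      ring
    calc p (a+b) = ∑ _T ∈ N, ((a : ℚ) * c) := Finset.sum_congr rfl hterm
      _ = (N.card : ℚ) * ((a : ℚ) * c) := by rw [Finset.sum_const, nsmul_eq_mul]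
  have hone : p 1 = ∑ T ∈ N, (entry a b c T 1 b : ℚ) := by
    rw [hp]
    refine Finset.sum_congr rfl ?_
    intro T _
    rw [PPaux.Gn_one T (by omega) (by omega)]
  have hcard : (N.card : ℚ) ≠ 0 := by
    have : N.Nonempty := ⟨_, PPaux.zero_mem⟩
    have := Finset.card_pos.2 this
    positivity
  have hmain : ((a:ℚ) + b) * p 1 = (N.card : ℚ) * ((a : ℚ) * c) := by
    have := hlin (a+b) (le_refl _)
    rw [← htop, this]
    push_cast
    ring
  have hab : (a : ℚ) + b ≠ 0 := by positivity
  rw [E, ← hN, ← hone]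
  rw [div_eq_div_iff hcard hab]
  linarith [hmain]
end
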